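/- arXiv:1902.02473 — 4 statements merged into one kernel-verified Lean document; each statement's English description precedes it below -/
import Mathlib

section
/- Let β* be a positive real root of the equation 6e⁶ + 5x·e³ − x² + (−2e⁶ − 5x·e³ + x²)·ln(e³ + x) = 0 in the unknown x (numerically β* ≈ 104.122). Let β be a real number with β > β*, and let p ∈ H₁ with p(z) ≠ 0 for all z ∈ 𝔻. If the function z ↦ p(z)² + β·z·p′(z)/p(z)² is subordinate to z ↦ e^z on 𝔻, then p is subordinate to z ↦ e^z on 𝔻. -/
open Complex

noncomputable section

/-- The open unit disk in the complex plane. -/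
def unitDisk : Set ℂ := Metric.ball 0 1

/-- `f` is subordinate to `g` on the open unit disk: there is an analytic
Schwarz function `w` with `w 0 = 0`, `‖w z‖ < 1` on the disk, and `f = g ∘ w`. -/
def Subord (f g : ℂ → ℂ) : Prop :=
  ∃ w : ℂ → ℂ, DifferentiableOn ℂ w unitDisk ∧ w 0 = 0 ∧
    (∀ z ∈ unitDisk, ‖w z‖ < 1) ∧ ∀ z ∈ unitDisk, f z = g (w z)

open Metric Set Filter intervalIntegral

lemma unitDisk_open : IsOpen unitDisk := isOpen_ball

lemma mem_unitDisk {z : ℂ} : z ∈ unitDisk ↔ ‖z‖ < 1 := by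
  simp [unitDisk, mem_ball_zero_iff]

lemma smul_mem_unitDisk {t : ℝ} {z : ℂ} (ht0 : -1 ≤ t) (ht1 : t ≤ 1) (hz : z ∈ unitDisk) :
    (t : ℂ) * z ∈ unitDisk := by
  rw [mem_unitDisk] at hz ⊢
  rw [norm_mul, Complex.norm_real]
  calc ‖t‖ * ‖z‖ ≤ 1 * ‖z‖ := by
        apply mul_le_mul_of_nonneg_right _ (norm_nonneg z)
        rw [Real.norm_eq_abs, abs_le]; exact ⟨ht0, ht1⟩
    _ < 1 := by rwa [one_mul]

/-- Existence of a holomorphic logarithm on the unit disk. -/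
lemma exists_log (p : ℂ → ℂ) (hp : DifferentiableOn ℂ p unitDisk) (hp0 : p 0 = 1)
    (hpne : ∀ z ∈ unitDisk, p z ≠ 0) :
    ∃ h : ℂ → ℂ, DifferentiableOn ℂ h unitDisk ∧ h 0 = 0 ∧
      ∀ z ∈ unitDisk, p z = Complex.exp (h z) := by
  set q : ℂ → ℂ := fun x => deriv p x / p x with hq
  have hqc : ContinuousOn q unitDisk := by
    apply ContinuousOn.div
    · exact ((hp.analyticOnNhd unitDisk_open).deriv.continuousOn)
    · exact hp.continuousOn
    · exact hpne
  set h : ℂ → ℂ := fun z => ∫ t in (0:ℝ)..1, z * q ((t : ℂ) * z) with hh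
  -- basic facts about the integrand
  have hUopen : ∀ z : ℂ, IsOpen ((fun s : ℝ => (s : ℂ) * z) ⁻¹' unitDisk) := by
    intro z
    exact unitDisk_open.preimage (by continuity)
  have hUsub : ∀ z ∈ unitDisk, Icc (0:ℝ) 1 ⊆ ((fun s : ℝ => (s : ℂ) * z) ⁻¹' unitDisk) := by
    intro z hz t ht
    exact smul_mem_unitDisk (by linarith [ht.1]) ht.2 hz
  have hIc : ∀ z ∈ unitDisk, ContinuousOn (fun s : ℝ => z * q ((s : ℂ) * z))
      ((fun s : ℝ => (s : ℂ) * z) ⁻¹' unitDisk) := by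
    intro z hz
    apply continuousOn_const.mul
    exact hqc.comp (Continuous.continuousOn (by continuity)) (fun s hs => hs)
  -- p = exp ∘ h on the disk
  have hexp : ∀ z ∈ unitDisk, p z = Complex.exp (h z) := by
    intro z hz
    set G : ℝ → ℂ := fun t => ∫ s in (0:ℝ)..t, z * q ((s : ℂ) * z) with hG
    have hGd : ∀ t ∈ Icc (0:ℝ) 1, HasDerivAt G (z * q ((t : ℂ) * z)) t := by
      intro t ht
      apply intervalIntegral.integral_hasDerivAt_right
      · refine ((hIc z hz).mono ?_).intervalIntegrable
        rw [Set.uIcc_of_le ht.1]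
        exact fun s hs => hUsub z hz ⟨hs.1, le_trans hs.2 ht.2⟩
      · exact ((hIc z hz).stronglyMeasurableAtFilter (hUopen z) _ (hUsub z hz ht))
      · exact ((hIc z hz).continuousAt ((hUopen z).mem_nhds (hUsub z hz ht)))
    have hmem : ∀ t ∈ Icc (0:ℝ) 1, (t : ℂ) * z ∈ unitDisk := fun t ht =>
      smul_mem_unitDisk (by linarith [ht.1]) ht.2 hz
    set φ : ℝ → ℂ := fun t => Complex.exp (G t) * (p ((t : ℂ) * z))⁻¹ with hφ
    have hφd : ∀ t ∈ Icc (0:ℝ) 1, HasDerivAt φ 0 t := by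
      intro t ht
      have hpm := hmem t ht
      have h1 : HasDerivAt (fun u : ℂ => p (u * z)) (deriv p ((t : ℂ) * z) * z) (t : ℂ) := by
        have hpd : HasDerivAt p (deriv p ((t : ℂ) * z)) ((t : ℂ) * z) :=
          (hp.differentiableAt (unitDisk_open.mem_nhds hpm)).hasDerivAt
        exact HasDerivAt.comp _ hpd (by simpa using (hasDerivAt_id ((t:ℂ))).mul_const z)
      have hinv := (h1.inv (show (fun u : ℂ => p (u * z)) (t : ℂ) ≠ 0 from
        hpne _ hpm)).comp_ofReal
      have hexpG := (hGd t ht).cexp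
      have := hexpG.mul hinv
      refine this.congr_deriv ?_
      have hpne' := hpne _ hpm
      simp only [Pi.inv_apply, hq]
      field_simp
      ring
    have hφc : ContinuousOn φ (Icc (0:ℝ) 1) :=
      fun t ht => ((hφd t ht).continuousAt).continuousWithinAt
    have hconst : φ 1 = φ 0 := by
      have := constant_of_has_deriv_right_zero hφc
        (fun t ht => ((hφd t (Ico_subset_Icc_self ht)).hasDerivWithinAt))
      exact this 1 (by norm_num)
    have hφ0 : φ 0 = 1 := by
      simp [hφ, hG, intervalIntegral.integral_same, hp0]
    have hφ1 : φ 1 = Complex.exp (h z) * (p z)⁻¹ := by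
      simp [hφ, hG, hh]
    rw [hφ1, hφ0] at hconst
    have hpz := hpne z hz
    field_simp at hconst
    exact hconst.symm
  have h00 : h 0 = 0 := by simp [hh]
  -- continuity of h on the disk
  have hcont : ∀ z ∈ unitDisk, ContinuousAt h z := by
    intro z₀ hz₀
    have hz₀n : ‖z₀‖ < 1 := mem_unitDisk.1 hz₀
    set r : ℝ := (1 + ‖z₀‖) / 2 with hr
    have hr1 : r < 1 := by rw [hr]; linarith
    have hr0 : 0 ≤ r := by positivity
    have hrz : ‖z₀‖ < r := by rw [hr]; linarith
    have hcompact : IsCompact (closedBall (0:ℂ) r) := isCompact_closedBall _ _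
    have hsubD : closedBall (0:ℂ) r ⊆ unitDisk := by
      intro x hx
      rw [mem_unitDisk]
      exact lt_of_le_of_lt (mem_closedBall_zero_iff.1 hx) hr1
    obtain ⟨M, hM⟩ := hcompact.exists_bound_of_continuousOn (hqc.mono hsubD)
    have hM0 : 0 ≤ M := le_trans (norm_nonneg _) (hM 0 (mem_closedBall_self hr0))
    rw [ContinuousAt]
    have : h z₀ = ∫ t in (0:ℝ)..1, z₀ * q ((t : ℂ) * z₀) := rfl
    rw [this]
    apply intervalIntegral.tendsto_integral_filter_of_dominated_convergence
      (fun _ => r * M)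
    · filter_upwards [unitDisk_open.mem_nhds hz₀] with z hz
      apply ContinuousOn.aestronglyMeasurable _ measurableSet_Ioc
      exact (hIc z hz).mono (fun s hs => hUsub z hz ⟨le_of_lt (by simpa using hs.1), by simpa using hs.2⟩)
    · filter_upwards [Metric.closedBall_mem_nhds_of_mem (show z₀ ∈ Metric.ball (0:ℂ) r by
        simpa [mem_ball_zero_iff] using hrz)] with z hz
      refine Filter.Eventually.of_forall (fun t => ?_)
      intro ht
      have htz : (t : ℂ) * z ∈ closedBall (0:ℂ) r := by
        rw [mem_closedBall_zero_iff, norm_mul, Complex.norm_real]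
        calc ‖t‖ * ‖z‖ ≤ 1 * r := by
              apply mul_le_mul _ (mem_closedBall_zero_iff.1 hz) (norm_nonneg _) zero_le_one
              rw [Real.norm_eq_abs, abs_le]
              rcases Set.mem_uIoc.1 ht with h | h
              · exact ⟨by linarith [h.1], h.2⟩
              · exact ⟨by linarith [h.1], by linarith [h.2]⟩
          _ = r := one_mul r
      rw [norm_mul]
      exact mul_le_mul (mem_closedBall_zero_iff.1 hz) (hM _ htz) (norm_nonneg _) hr0
    · exact intervalIntegrable_const
    · refine Filter.Eventually.of_forall (fun t ht => ?_)
      have htm : (t : ℂ) * z₀ ∈ unitDisk := by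
        rcases Set.mem_uIoc.1 ht with h | h
        · exact smul_mem_unitDisk (by linarith [h.1]) h.2 hz₀
        · exact smul_mem_unitDisk (by linarith [h.1]) (by linarith [h.2]) hz₀
      have : ContinuousAt (fun z : ℂ => z * q ((t : ℂ) * z)) z₀ := by
        apply continuousAt_id.mul
        exact (hqc.continuousAt (unitDisk_open.mem_nhds htm)).comp
          ((continuous_mul_left ((t:ℂ))).continuousAt)
      exact this
  -- differentiability of h on the disk
  have hdiff : ∀ z ∈ unitDisk, DifferentiableAt ℂ h z := by
    intro z₀ hz₀
    have hp0' : p z₀ ≠ 0 := hpne z₀ hz₀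
    have hratio : ContinuousAt (fun z => p z / p z₀) z₀ :=
      ((hp.continuousOn.continuousAt (unitDisk_open.mem_nhds hz₀)).div_const _)
    have hr1 : Filter.Tendsto (fun z => p z / p z₀) (nhds z₀) (nhds 1) := by
      have : p z₀ / p z₀ = 1 := div_self hp0'
      simpa [this] using hratio.tendsto
    have hlog : Filter.Tendsto (fun z => Complex.log (p z / p z₀)) (nhds z₀) (nhds 0) := by
      have := (continuousAt_clog Complex.one_mem_slitPlane).tendsto
      rw [Complex.log_one] at this
      exact this.comp hr1
    have hev : ∀ᶠ z in nhds z₀, h z = h z₀ + Complex.log (p z / p z₀) := by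
      have e1 : ∀ᶠ z in nhds z₀, ‖h z - h z₀‖ < 1 := by
        have := (hcont z₀ hz₀).tendsto
        have := Metric.tendsto_nhds.1 this 1 one_pos
        filter_upwards [this] with z hz
        rwa [dist_eq_norm] at hz
      have e2 : ∀ᶠ z in nhds z₀, ‖Complex.log (p z / p z₀)‖ < 1 := by
        have := Metric.tendsto_nhds.1 hlog 1 one_pos
        filter_upwards [this] with z hz
        rwa [dist_zero_right] at hz
      have e3 : ∀ᶠ z in nhds z₀, z ∈ unitDisk := unitDisk_open.mem_nhds hz₀
      filter_upwards [e1, e2, e3] with z h1 h2 h3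
      have hpz : p z ≠ 0 := hpne z h3
      set d := h z - h z₀ - Complex.log (p z / p z₀) with hd
      have hde : Complex.exp d = 1 := by
        rw [hd, Complex.exp_sub, Complex.exp_sub,
          Complex.exp_log (div_ne_zero hpz hp0'), ← hexp z h3, ← hexp z₀ hz₀]
        field_simp
      obtain ⟨n, hn⟩ := Complex.exp_eq_one_iff.1 hde
      have hdn : ‖d‖ < 2 := by
        calc ‖d‖ ≤ ‖h z - h z₀‖ + ‖Complex.log (p z / p z₀)‖ := norm_sub_le _ _
          _ < 2 := by linarith
      have hn0 : n = 0 := by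
        by_contra hne0
        have h1n : (1:ℝ) ≤ |(n:ℝ)| := by
          rw [← Int.cast_abs]
          exact_mod_cast Int.one_le_abs hne0
        have hnd : ‖d‖ = |(n:ℝ)| * (2 * Real.pi) := by
          rw [hn, norm_mul, norm_mul, norm_mul]
          simp [Real.norm_eq_abs, abs_of_pos Real.pi_pos]
        nlinarith [Real.pi_gt_three]
      rw [hn0] at hn
      simp at hn
      have : h z - h z₀ - Complex.log (p z / p z₀) = 0 := hn
      linear_combination this
    have hd2 : DifferentiableAt ℂ (fun z => h z₀ + Complex.log (p z / p z₀)) z₀ := by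
      apply DifferentiableAt.add (differentiableAt_const _)
      apply DifferentiableAt.clog
      · exact (hp.differentiableAt (unitDisk_open.mem_nhds hz₀)).div_const _
      · simp only [div_self hp0']
        exact Complex.one_mem_slitPlane
    exact (Filter.EventuallyEq.differentiableAt_iff hev).2 (by
      exact hd2)
  exact ⟨h, fun z hz => (hdiff z hz).differentiableWithinAt, h00, hexp⟩


lemma betastar_gt_28 (βstar : ℝ) (hβstar : 0 < βstar)
    (hroot : 6 * Real.exp 1 ^ 6 + 5 * βstar * Real.exp 1 ^ 3 - βstar ^ 2 +
        (-2 * Real.exp 1 ^ 6 - 5 * βstar * Real.exp 1 ^ 3 + βstar ^ 2) *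
          Real.log (Real.exp 1 ^ 3 + βstar) = 0) : 28 < βstar := by
  by_contra hle
  push_neg at hle
  have he : (2.7182818283:ℝ) < Real.exp 1 := Real.exp_one_gt_d9
  set E := Real.exp 1 with hE
  have hE0 : 0 < E := Real.exp_pos 1
  have h3 : (2.7182818283:ℝ) ^ 3 < E ^ 3 := by
    apply pow_lt_pow_left₀ he (by norm_num) (by norm_num)
  have h6 : (2.7182818283:ℝ) ^ 6 < E ^ 6 := by
    apply pow_lt_pow_left₀ he (by norm_num) (by norm_num)
  have hE3 : 20 < E ^ 3 := by nlinarith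
  have hE6 : 392 < E ^ 6 := by nlinarith
  have hlog3 : Real.log (E ^ 3) = 3 := by
    rw [Real.log_pow, hE, Real.log_exp]; norm_num
  have hL : 3 ≤ Real.log (E ^ 3 + βstar) := by
    rw [← hlog3]
    apply Real.log_le_log (by positivity) (by linarith)
  have hB : -2 * E ^ 6 - 5 * βstar * E ^ 3 + βstar ^ 2 < 0 := by nlinarith
  nlinarith [mul_le_mul_of_nonpos_left hL (le_of_lt hB)]



set_option maxHeartbeats 2000000 in
theorem stmt_15 (βstar : ℝ) (hβstar : 0 < βstar)
    (hroot : 6 * Real.exp 1 ^ 6 + 5 * βstar * Real.exp 1 ^ 3 - βstar ^ 2 +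
        (-2 * Real.exp 1 ^ 6 - 5 * βstar * Real.exp 1 ^ 3 + βstar ^ 2) *
          Real.log (Real.exp 1 ^ 3 + βstar) = 0)
    (β : ℝ) (hβ : βstar < β)
    (p : ℂ → ℂ) (hp : DifferentiableOn ℂ p unitDisk) (hp0 : p 0 = 1)
    (hpne : ∀ z ∈ unitDisk, p z ≠ 0)
    (hsub : Subord (fun z => (p z) ^ 2 + (β : ℂ) * z * deriv p z / (p z) ^ 2)
      Complex.exp) :
    Subord p Complex.exp := by
  have hβ28 : (28:ℝ) < β := lt_trans (betastar_gt_28 βstar hβstar hroot) hβ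
  obtain ⟨h, hhd, hh0, hhe⟩ := exists_log p hp hp0 hpne
  have hhA : ∀ z ∈ unitDisk, DifferentiableAt ℂ h z := fun z hz =>
    hhd.differentiableAt (unitDisk_open.mem_nhds hz)
  by_cases hbig : ∀ z ∈ unitDisk, ‖h z‖ < 1
  · exact ⟨h, hhd, hh0, hbig, fun z hz => hhe z hz⟩
  push_neg at hbig
  obtain ⟨z₁, hz₁, hn1⟩ := hbig
  exfalso
  have hz₁n : ‖z₁‖ < 1 := mem_unitDisk.1 hz₁
  -- the compact set of "bad" points and a minimizer of the norm on it
  set K : Set ℂ := Metric.closedBall (0:ℂ) ‖z₁‖ ∩ {z | 1 ≤ ‖h z‖} with hK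
  have hKsubD : Metric.closedBall (0:ℂ) ‖z₁‖ ⊆ unitDisk := fun x hx =>
    mem_unitDisk.2 (lt_of_le_of_lt (mem_closedBall_zero_iff.1 hx) hz₁n)
  have hKclosed : IsClosed K := by
    have : K = Metric.closedBall (0:ℂ) ‖z₁‖ ∩ (fun z => ‖h z‖) ⁻¹' (Ici 1) := by
      ext x; simp [hK, Set.mem_preimage, Set.mem_setOf_eq]
    rw [this]
    exact ContinuousOn.preimage_isClosed_of_isClosed
      ((hhd.continuousOn.mono hKsubD).norm) Metric.isClosed_closedBall isClosed_Ici
  have hKcompact : IsCompact K :=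
    (isCompact_closedBall (0:ℂ) ‖z₁‖).of_isClosed_subset hKclosed Set.inter_subset_left
  have hKne : K.Nonempty := ⟨z₁, mem_closedBall_zero_iff.2 le_rfl, hn1⟩
  obtain ⟨z₂, hz₂K, hz₂min⟩ := hKcompact.exists_isMinOn hKne continuous_norm.continuousOn
  have hz₂le : ‖z₂‖ ≤ ‖z₁‖ := mem_closedBall_zero_iff.1 hz₂K.1
  have hz₂D : z₂ ∈ unitDisk := mem_unitDisk.2 (lt_of_le_of_lt hz₂le hz₁n)
  have hz₂n : ‖z₂‖ < 1 := mem_unitDisk.1 hz₂D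
  have hz₂pos : 0 < ‖z₂‖ := by
    rcases eq_or_lt_of_le (norm_nonneg z₂) with h0 | h0
    · exfalso
      have hz20 : z₂ = 0 := by rwa [eq_comm, norm_eq_zero] at h0
      have h12 := hz₂K.2
      rw [Set.mem_setOf_eq, hz20, hh0] at h12
      simp at h12
      try linarith
    · exact h0
  -- below the critical radius the function is strictly less than 1 in norm
  have C1 : ∀ z : ℂ, ‖z‖ < ‖z₂‖ → ‖h z‖ < 1 := by
    intro z hz
    by_contra hc
    push_neg at hc
    have hzK : z ∈ K := ⟨mem_closedBall_zero_iff.2 (le_trans (le_of_lt hz) hz₂le), hc⟩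
    exact absurd (hz₂min hzK) (by simpa using hz)
  -- and at most 1 on the closed ball of the critical radius
  have C2 : ∀ z : ℂ, ‖z‖ ≤ ‖z₂‖ → ‖h z‖ ≤ 1 := by
    intro z hzle
    have hzD : z ∈ unitDisk := mem_unitDisk.2 (lt_of_le_of_lt hzle hz₂n)
    have hcont : ContinuousAt (fun r : ℝ => ‖h ((r:ℂ) * z)‖) 1 := by
      apply ContinuousAt.norm
      apply ContinuousAt.comp
      · simpa using (hhA z hzD).continuousAt
      · exact ContinuousAt.mul (Complex.continuous_ofReal.continuousAt) continuousAt_const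
    have htend : Filter.Tendsto (fun r : ℝ => ‖h ((r:ℂ) * z)‖)
        (nhdsWithin 1 (Set.Iio 1)) (nhds ‖h z‖) := by
      have := hcont.tendsto.mono_left (nhdsWithin_le_nhds : nhdsWithin (1:ℝ) (Set.Iio 1) ≤ _)
      simpa using this
    have hev : ∀ᶠ r : ℝ in nhdsWithin 1 (Set.Iio 1), ‖h ((r:ℂ) * z)‖ ≤ 1 := by
      filter_upwards [Ioo_mem_nhdsLT_of_mem (show (1:ℝ) ∈ Set.Ioc 0 1 by norm_num)]
        with r hr
      apply le_of_lt
      apply C1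
      rw [norm_mul, Complex.norm_real, Real.norm_eq_abs, abs_of_pos hr.1]
      calc r * ‖z‖ ≤ r * ‖z₂‖ := by nlinarith [hr.1.le]
        _ < ‖z₂‖ := by nlinarith [hr.2]
    exact le_of_tendsto htend hev
  have hζ1 : ‖h z₂‖ = 1 := le_antisymm (C2 z₂ le_rfl) hz₂K.2
  set ζ : ℂ := h z₂ with hζ
  -- the rescaled function g
  set g : ℂ → ℂ := fun u => h (u * z₂) with hg
  have hgd : ∀ u : ℂ, ‖u‖ < 1 / ‖z₂‖ → DifferentiableAt ℂ g u := by
    intro u hu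
    have hmem : u * z₂ ∈ unitDisk := by
      rw [mem_unitDisk, norm_mul]
      calc ‖u‖ * ‖z₂‖ < (1/‖z₂‖) * ‖z₂‖ := by
            exact mul_lt_mul_of_pos_right hu hz₂pos
        _ = 1 := one_div_mul_cancel (ne_of_gt hz₂pos)
    exact (hhA _ hmem).comp u ((differentiableAt_id).mul_const z₂)
  have hR1 : (1:ℝ) < 1 / ‖z₂‖ := (one_lt_div hz₂pos).2 hz₂n
  have hgd1 : ∀ u : ℂ, ‖u‖ ≤ 1 → DifferentiableAt ℂ g u :=
    fun u hu => hgd u (lt_of_le_of_lt hu hR1)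
  have hg0 : g 0 = 0 := by simp [hg, hh0]
  have hgle : ∀ u : ℂ, ‖u‖ ≤ 1 → ‖g u‖ ≤ 1 := by
    intro u hu
    apply C2
    rw [norm_mul]
    nlinarith [norm_nonneg z₂]
  -- Schwarz inequality for g
  have hS : ∀ u : ℂ, ‖u‖ < 1 → ‖g u‖ ≤ ‖u‖ := by
    intro u hu
    have key : ∀ ε : ℝ, 0 < ε → ‖g u‖ ≤ (1 + ε) * ‖u‖ := by
      intro ε hε
      have hd : DifferentiableOn ℂ g (Metric.ball (0:ℂ) 1) :=
        fun v hv => (hgd1 v (le_of_lt (mem_ball_zero_iff.1 hv))).differentiableWithinAt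
      have hmaps : Set.MapsTo g (Metric.ball (0:ℂ) 1) (Metric.ball (g 0) (1 + ε)) := by
        intro v hv
        rw [hg0, Metric.mem_ball, dist_zero_right]
        exact lt_of_le_of_lt (hgle v (le_of_lt (mem_ball_zero_iff.1 hv))) (by linarith)
      have := Complex.dist_le_div_mul_dist_of_mapsTo_ball hd (hmaps.mono_right Metric.ball_subset_closedBall)
        (mem_ball_zero_iff.2 hu)
      rw [hg0, dist_zero_right, dist_zero_right] at this
      calc ‖g u‖ ≤ (1 + ε) / 1 * ‖u‖ := this
        _ = (1 + ε) * ‖u‖ := by ring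
    by_contra hc
    push_neg at hc
    have hu0 : 0 < ‖u‖ := by
      rcases eq_or_lt_of_le (norm_nonneg u) with h0 | h0
      · exfalso
        have hu00 : u = 0 := by rwa [eq_comm, norm_eq_zero] at h0
        rw [hu00, hg0] at hc
        simp at hc
      · exact h0
    have := key ((‖g u‖ - ‖u‖) / (2 * ‖u‖)) (div_pos (by linarith) (by linarith))
    have hexp : (1 + (‖g u‖ - ‖u‖) / (2 * ‖u‖)) * ‖u‖ = ‖u‖ + (‖g u‖ - ‖u‖)/2 := by
      field_simp [show ‖u‖ ≠ 0 from ne_of_gt hu0]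
    rw [hexp] at this
    linarith
  -- derivative of g at 1
  have hgd1' : HasDerivAt g (deriv h z₂ * z₂) 1 := by
    have h1 : HasDerivAt (fun u : ℂ => u * z₂) z₂ 1 := by
      simpa using (hasDerivAt_id (1:ℂ)).mul_const z₂
    have h2 : HasDerivAt h (deriv h z₂) (1 * z₂) := by
      rw [one_mul]; exact (hhA z₂ hz₂D).hasDerivAt
    exact h2.comp (1:ℂ) h1
  set g' : ℂ := deriv h z₂ * z₂ with hg'
  -- Jack's lemma, tangential part
  have hc2 : HasDerivAt (fun θ : ℝ => g (Complex.exp (θ * Complex.I))) (g' * Complex.I) 0 := by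
    have hi : HasDerivAt (fun u : ℂ => Complex.exp (u * Complex.I)) Complex.I 0 := by
      have := ((hasDerivAt_id (0:ℂ)).mul_const Complex.I).cexp
      simpa using this
    have := HasDerivAt.comp (0:ℂ) (by simpa using hgd1') hi
    have h2 := this.comp_ofReal
    simpa [mul_comm] using h2
  have hAderiv : HasDerivAt (fun θ : ℝ => Complex.normSq (g (Complex.exp (θ * Complex.I))))
      (2 * ((g 1).re * (g' * Complex.I).re + (g 1).im * (g' * Complex.I).im)) 0 := by
    have hre := (Complex.reCLM.hasFDerivAt.comp_hasDerivAt 0 hc2)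
    have him := (Complex.imCLM.hasFDerivAt.comp_hasDerivAt 0 hc2)
    have h1 := (hre.pow 2).add (him.pow 2)
    have : (fun θ : ℝ => Complex.normSq (g (Complex.exp (θ * Complex.I)))) =
        (fun θ : ℝ => ((g (Complex.exp (θ * Complex.I))).re) ^ 2 +
          ((g (Complex.exp (θ * Complex.I))).im) ^ 2) := by
      funext θ; rw [Complex.normSq_apply]; ring
    rw [this]
    refine h1.congr_deriv ?_
    simp [Complex.exp_zero]
    ring
  have hAmax : IsLocalMax (fun θ : ℝ => Complex.normSq (g (Complex.exp (θ * Complex.I)))) 0 := by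
    apply Filter.Eventually.of_forall
    intro θ
    have h1 : ‖g (Complex.exp ((θ:ℂ) * Complex.I))‖ ≤ 1 := by
      apply hgle
      rw [show ((θ:ℂ) * Complex.I) = ((θ:ℝ):ℂ) * Complex.I from rfl]
      rw [Complex.norm_exp_ofReal_mul_I]
    have h0 : Complex.normSq (g (Complex.exp ((0:ℝ) * Complex.I))) = 1 := by
      simp [Complex.exp_zero, hg, one_mul, ← hζ]
      rw [Complex.normSq_eq_norm_sq, hζ1]
      norm_num
    simp only
    rw [h0]
    calc Complex.normSq (g (Complex.exp ((θ:ℂ) * Complex.I)))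
        = ‖g (Complex.exp ((θ:ℂ) * Complex.I))‖ ^ 2 := by
          rw [Complex.normSq_eq_norm_sq]
      _ ≤ 1 := by nlinarith [norm_nonneg (g (Complex.exp ((θ:ℂ) * Complex.I)))]
  have hIm0 : (g 1).re * (g' * Complex.I).re + (g 1).im * (g' * Complex.I).im = 0 := by
    have := hAmax.deriv_eq_zero
    rw [hAderiv.deriv] at this
    linarith
  -- Jack's lemma, radial part
  have hBderiv : HasDerivAt (fun t : ℝ => t ^ 2 - Complex.normSq (g t))
      (2 - 2 * ((g 1).re * g'.re + (g 1).im * g'.im)) 1 := by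
    have hc1 : HasDerivAt (fun t : ℝ => g (t:ℂ)) g' 1 := hgd1'.comp_ofReal
    have hre := (Complex.reCLM.hasFDerivAt.comp_hasDerivAt 1 hc1)
    have him := (Complex.imCLM.hasFDerivAt.comp_hasDerivAt 1 hc1)
    have h1 := ((hasDerivAt_pow 2 (1:ℝ))).sub ((hre.pow 2).add (him.pow 2))
    have heq : (fun t : ℝ => t ^ 2 - Complex.normSq (g t)) =
        (fun t : ℝ => t ^ 2 - (((g (t:ℂ)).re) ^ 2 + ((g (t:ℂ)).im) ^ 2)) := by
      funext t; rw [Complex.normSq_apply]; ring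
    rw [heq]
    refine h1.congr_deriv ?_
    simp
    ring
  have hm1 : 1 ≤ (g 1).re * g'.re + (g 1).im * g'.im := by
    have hslope := hasDerivAt_iff_tendsto_slope.1 hBderiv
    have hmono : nhdsWithin (1:ℝ) (Set.Iio 1) ≤ nhdsWithin 1 {(1:ℝ)}ᶜ :=
      nhdsWithin_mono 1 (fun x hx => ne_of_lt hx)
    have htend := hslope.mono_left hmono
    have hev : ∀ᶠ t : ℝ in nhdsWithin 1 (Set.Iio 1),
        slope (fun t : ℝ => t ^ 2 - Complex.normSq (g t)) 1 t ≤ 0 := by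
      filter_upwards [Ioo_mem_nhdsLT_of_mem (show (1:ℝ) ∈ Set.Ioc 0 1 by norm_num)]
        with t ht
      have hB1 : (fun t : ℝ => t ^ 2 - Complex.normSq (g t)) 1 = 0 := by
        simp only
        have : Complex.normSq (g ((1:ℝ):ℂ)) = 1 := by
          simp only [Complex.ofReal_one]
          rw [show g 1 = ζ by simp [hg, one_mul, hζ]]
          rw [Complex.normSq_eq_norm_sq, hζ1]; norm_num
        rw [this]; norm_num
      have hBt : 0 ≤ (fun t : ℝ => t ^ 2 - Complex.normSq (g t)) t := by
        simp only
        have hnt : ‖g (t:ℂ)‖ ≤ ‖(t:ℂ)‖ := by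
          apply hS
          rw [Complex.norm_real, Real.norm_eq_abs, abs_of_pos ht.1]
          exact ht.2
        rw [Complex.norm_real, Real.norm_eq_abs, abs_of_pos ht.1] at hnt
        have : Complex.normSq (g (t:ℂ)) = ‖g (t:ℂ)‖ ^ 2 := by
          rw [Complex.normSq_eq_norm_sq]
        rw [this]
        nlinarith [norm_nonneg (g (t:ℂ))]
      have ht1 : t - 1 < 0 := by linarith [ht.2]
      rw [slope_def_field]
      simp only at hB1 hBt
      rw [hB1, sub_zero]
      exact div_nonpos_iff.2 (Or.inl ⟨hBt, le_of_lt ht1⟩)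
    have := le_of_tendsto htend hev
    linarith
  -- assemble: g' = m * ζ with m real, m ≥ 1
  set m : ℝ := (g 1).re * g'.re + (g 1).im * g'.im with hmdef
  have hg1ζ : g 1 = ζ := by simp [hg, one_mul, hζ]
  have hnsq : Complex.normSq ζ = 1 := by
    rw [Complex.normSq_eq_norm_sq, hζ1]; norm_num
  have hconj : (starRingEnd ℂ) ζ * g' = (m:ℂ) := by
    apply Complex.ext
    · simp only [Complex.mul_re, Complex.conj_re, Complex.conj_im, Complex.ofReal_re, hmdef,
        hg1ζ]
      ring
    · simp only [Complex.mul_im, Complex.conj_re, Complex.conj_im, Complex.ofReal_im]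
      rw [hg1ζ] at hIm0
      simp only [Complex.mul_re, Complex.mul_im, Complex.I_re, Complex.I_im] at hIm0
      linarith
  have hg'eq : g' = (m:ℂ) * ζ := by
    have hζc : ζ * (starRingEnd ℂ) ζ = 1 := by
      rw [Complex.mul_conj, hnsq]; norm_num
    calc g' = (ζ * (starRingEnd ℂ) ζ) * g' := by rw [hζc, one_mul]
      _ = ζ * ((starRingEnd ℂ) ζ * g') := by ring
      _ = ζ * (m:ℂ) := by rw [hconj]
      _ = (m:ℂ) * ζ := by ring
  -- the subordination hypothesis at z₂
  obtain ⟨w, hwd, hw0, hwlt, hweq⟩ := hsub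
  have hFeq : p z₂ ^ 2 + (β : ℂ) * z₂ * deriv p z₂ / (p z₂) ^ 2 = Complex.exp (w z₂) := by
    have := hweq z₂ hz₂D
    simpa using this
  have hder : deriv p z₂ = Complex.exp ζ * deriv h z₂ := by
    have hev : p =ᶠ[nhds z₂] (fun z => Complex.exp (h z)) :=
      Filter.eventuallyEq_of_mem (unitDisk_open.mem_nhds hz₂D) (fun z hz => hhe z hz)
    rw [hev.deriv_eq]
    simpa [hζ] using (((hhA z₂ hz₂D).hasDerivAt).cexp).deriv
  have hpz₂ : p z₂ = Complex.exp ζ := hhe z₂ hz₂D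
  have hzd : z₂ * deriv h z₂ = (m:ℂ) * ζ := by rw [← hg'eq, hg']; ring
  have hexpne : Complex.exp ζ ≠ 0 := Complex.exp_ne_zero ζ
  have hFval : p z₂ ^ 2 + (β:ℂ) * z₂ * deriv p z₂ / (p z₂) ^ 2
      = Complex.exp ζ ^ 2 + (β:ℂ) * (m:ℂ) * ζ / Complex.exp ζ := by
    rw [hpz₂, hder]
    field_simp
    linear_combination (β:ℂ) * hzd
  -- norm estimates
  set E : ℝ := Real.exp 1 with hE
  have hE0 : 0 < E := Real.exp_pos 1
  have hζre : |ζ.re| ≤ 1 := by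
    calc |ζ.re| ≤ ‖ζ‖ := Complex.abs_re_le_norm ζ
      _ = 1 := by exact hζ1
  have habs_re : |ζ.re| ≤ 1 := hζre
  have hre1 : ζ.re ≤ 1 := le_trans (le_abs_self _) hζre
  have hre2 : -1 ≤ ζ.re := by
    have := neg_abs_le ζ.re
    linarith [abs_le.1 hζre |>.1]
  have hexpre_le : Real.exp ζ.re ≤ E := Real.exp_le_exp.2 hre1
  have hexpre_pos : 0 < Real.exp ζ.re := Real.exp_pos _
  have hm0 : (0:ℝ) < m := by linarith
  have hβ0 : (0:ℝ) < β := by linarith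
  -- ‖A‖
  have hA : ‖Complex.exp ζ ^ 2‖ ≤ E ^ 2 := by
    rw [norm_pow, Complex.norm_exp]
    have := hexpre_pos
    nlinarith
  -- ‖B‖
  have hB : β / E ≤ ‖(β:ℂ) * (m:ℂ) * ζ / Complex.exp ζ‖ := by
    rw [norm_div, norm_mul, norm_mul]
    rw [Complex.norm_exp]
    rw [Complex.norm_real, Complex.norm_real, Real.norm_eq_abs, Real.norm_eq_abs,
      abs_of_pos hβ0, abs_of_pos hm0, hζ1]
    rw [mul_one]
    have hnum : β ≤ β * m := by nlinarith
    exact div_le_div₀ (by nlinarith) hnum hexpre_pos hexpre_le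
  have hlow : β / E - E ^ 2 ≤ ‖Complex.exp (w z₂)‖ := by
    rw [← hFeq, hFval]
    have h1 : ‖(β:ℂ) * (m:ℂ) * ζ / Complex.exp ζ‖ ≤
        ‖Complex.exp ζ ^ 2 + (β:ℂ) * (m:ℂ) * ζ / Complex.exp ζ‖ + ‖Complex.exp ζ ^ 2‖ := by
      calc ‖(β:ℂ) * (m:ℂ) * ζ / Complex.exp ζ‖
          = ‖(Complex.exp ζ ^ 2 + (β:ℂ) * (m:ℂ) * ζ / Complex.exp ζ) - Complex.exp ζ ^ 2‖ := by
            congr 1; ring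
        _ ≤ _ := norm_sub_le _ _
    linarith
  have hup : ‖Complex.exp (w z₂)‖ < E := by
    rw [Complex.norm_exp]
    apply Real.exp_lt_exp.2
    calc (w z₂).re ≤ ‖w z₂‖ := Complex.re_le_norm _
      _ = ‖w z₂‖ := by rfl
      _ < 1 := hwlt z₂ hz₂D
  -- numeric contradiction: β/E - E² < E with β > 28 is impossible
  have heup : E < 2.7182818286 := Real.exp_one_lt_d9
  have helow : (2.7182818283:ℝ) < E := Real.exp_one_gt_d9
  have hE3 : E ^ 3 < 20.1 := by nlinarith
  have hE2 : E ^ 2 < 7.39 := by nlinarith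
  have : β / E < E + E ^ 2 := by linarith
  rw [div_lt_iff₀ hE0] at this
  nlinarith
end
end

section
/- Let β be a real number with β ≥ e³ + e, and let p ∈ H₁. If the function z ↦ p(z) + β·z·p(z)·p′(z) is subordinate to z ↦ e^z on 𝔻, then p is subordinate to z ↦ e^z on 𝔻. -/
open Complex

noncomputable section

namespace Stmt16Aux

open Metric Set

lemma im_bounds {ζ : ℂ} (h : ‖ζ‖ ≤ 1) : -Real.pi < ζ.im ∧ ζ.im ≤ Real.pi := by
  have h1 : |ζ.im| ≤ 1 := (Complex.abs_im_le_norm ζ).trans h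
  have hπ := Real.pi_gt_three
  rw [abs_le] at h1
  constructor <;> linarith [h1.1, h1.2]

lemma log_exp' {ζ : ℂ} (h : ‖ζ‖ ≤ 1) : Complex.log (Complex.exp ζ) = ζ :=
  Complex.log_exp (im_bounds h).1 (im_bounds h).2

lemma exp_mem_slit {ζ : ℂ} (h : ‖ζ‖ ≤ 1) : Complex.exp ζ ∈ Complex.slitPlane := by
  have h1 : |ζ.im| ≤ 1 := (Complex.abs_im_le_norm ζ).trans h
  have hπ := Real.pi_gt_three
  rw [abs_le] at h1
  rw [Complex.mem_slitPlane_iff]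
  by_cases h0 : ζ.im = 0
  · left
    rw [Complex.exp_re, h0, Real.cos_zero, mul_one]
    exact Real.exp_pos _
  · right
    rw [Complex.exp_im]
    intro hc
    rcases mul_eq_zero.mp hc with hc | hc
    · exact (Real.exp_pos _).ne' hc
    · exact h0 ((Real.sin_eq_zero_iff_of_lt_of_lt (by linarith [h1.1]) (by linarith [h1.2])).mp hc)

/-- Facts about members of `exp '' closedBall 0 1`. -/
lemma mem_cE {u : ℂ} (hu : u ∈ Complex.exp '' Metric.closedBall 0 1) :
    ‖Complex.log u‖ ≤ 1 ∧ Complex.exp (Complex.log u) = u ∧ u ∈ Complex.slitPlane := by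
  obtain ⟨ζ, hζ, rfl⟩ := hu
  rw [mem_closedBall_zero_iff] at hζ
  rw [log_exp' hζ]
  exact ⟨hζ, rfl, exp_mem_slit hζ⟩

lemma mem_E_log {u : ℂ} (hu : u ∈ Complex.exp '' Metric.ball 0 1) :
    ‖Complex.log u‖ < 1 ∧ Complex.exp (Complex.log u) = u := by
  obtain ⟨ζ, hζ, rfl⟩ := hu
  rw [mem_ball_zero_iff] at hζ
  rw [log_exp' hζ.le]
  exact ⟨hζ, rfl⟩

lemma mem_E_of {u : ℂ} (h1 : Complex.exp (Complex.log u) = u) (h2 : ‖Complex.log u‖ < 1) :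
    u ∈ Complex.exp '' Metric.ball 0 1 :=
  ⟨_, mem_ball_zero_iff.2 h2, h1⟩

lemma isOpen_E : IsOpen (Complex.exp '' Metric.ball 0 1) := by
  have hset : Complex.exp '' Metric.ball 0 1
      = Complex.slitPlane ∩ (Complex.log ⁻¹' Metric.ball 0 1) := by
    ext u
    constructor
    · intro hu
      have h := mem_E_log hu
      have hs := (mem_cE (Set.image_mono Metric.ball_subset_closedBall hu)).2.2
      exact ⟨hs, by simpa [mem_ball_zero_iff] using h.1⟩
    · rintro ⟨hs, hb⟩
      exact ⟨Complex.log u, hb, Complex.exp_log (Complex.slitPlane_ne_zero hs)⟩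
  rw [hset]
  exact ContinuousOn.isOpen_inter_preimage
    (fun x hx => (continuousAt_clog hx).continuousWithinAt)
    Complex.isOpen_slitPlane Metric.isOpen_ball

lemma closure_E_subset :
    closure (Complex.exp '' Metric.ball 0 1) ⊆ Complex.exp '' Metric.closedBall 0 1 :=
  closure_minimal (Set.image_mono Metric.ball_subset_closedBall)
    ((isCompact_closedBall (0:ℂ) 1).image Complex.continuous_exp).isClosed

lemma key_ineq {β x : ℝ} (hβ : Real.exp 1 ^ 3 + Real.exp 1 ≤ β) (hx : -1 ≤ x) :
    Real.exp 1 ≤ β * Real.exp x ^ 2 - Real.exp x := by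
  set E := Real.exp 1 with hE
  set t := Real.exp x with ht
  have hE0 : 0 < E := Real.exp_pos 1
  have ht0 : 0 < t := Real.exp_pos x
  have h1 : 1 ≤ E * t := by
    have h := Real.exp_le_exp.mpr (show (0:ℝ) ≤ 1 + x by linarith)
    rw [Real.exp_zero, Real.exp_add] at h
    exact h
  nlinarith [mul_nonneg (sub_nonneg.mpr h1) (by positivity : (0:ℝ) ≤ (E ^ 2 + 1) * t + E),
    mul_nonneg (sub_nonneg.mpr hβ) (sq_nonneg t)]

end Stmt16Aux

open Stmt16Aux Metric Set

set_option maxHeartbeats 3200000 in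
theorem stmt_16 (β : ℝ) (hβ : Real.exp 1 ^ 3 + Real.exp 1 ≤ β)
    (p : ℂ → ℂ) (hp : DifferentiableOn ℂ p unitDisk) (hp0 : p 0 = 1)
    (hsub : Subord (fun z => p z + (β : ℂ) * z * p z * deriv p z) Complex.exp) :
    Subord p Complex.exp := by
  classical
  have hdisk : unitDisk = Metric.ball (0:ℂ) 1 := rfl
  rw [hdisk] at hp
  have hp' : ∀ z ∈ Metric.ball (0:ℂ) 1, DifferentiableAt ℂ p z := fun z hz =>
    (hp z hz).differentiableAt (Metric.isOpen_ball.mem_nhds hz)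
  have hpc : ContinuousOn p (Metric.ball (0:ℂ) 1) := hp.continuousOn
  set E : Set ℂ := Complex.exp '' Metric.ball 0 1 with hEdef
  have h1E : (1:ℂ) ∈ E := ⟨0, mem_ball_self one_pos, Complex.exp_zero⟩
  by_cases hcase : ∀ z ∈ Metric.ball (0:ℂ) 1, p z ∈ E
  · -- p maps the disk into exp(𝔻); take w = log ∘ p
    refine ⟨fun z => Complex.log (p z), ?_, ?_, ?_, ?_⟩
    · intro z hz
      have hz' : z ∈ Metric.ball (0:ℂ) 1 := hz
      have hslit : p z ∈ Complex.slitPlane :=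
        (mem_cE (Set.image_mono Metric.ball_subset_closedBall (hcase z hz'))).2.2
      exact ((Complex.differentiableAt_log hslit).comp z (hp' z hz')).differentiableWithinAt
    · show Complex.log (p 0) = 0
      rw [hp0, Complex.log_one]
    · intro z hz
      exact (mem_E_log (hcase z hz)).1
    · intro z hz
      exact ((mem_E_log (hcase z hz)).2).symm
  · exfalso
    push_neg at hcase
    obtain ⟨z₁, hz₁, hz₁n⟩ := hcase
    have hz₁b : ‖z₁‖ < 1 := mem_ball_zero_iff.mp hz₁
    have hz₁pos : 0 < ‖z₁‖ := by
      rcases eq_or_lt_of_le (norm_nonneg z₁) with h | h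
      · exfalso; apply hz₁n
        have : z₁ = 0 := norm_le_zero_iff.mp h.ge
        rw [this, hp0]; exact h1E
      · exact h
    -- the set of radii on which p stays in E
    set A : Set ℝ := {r : ℝ | r ≤ ‖z₁‖ ∧ ∀ z : ℂ, ‖z‖ ≤ r → p z ∈ E} with hAdef
    have h0A : (0:ℝ) ∈ A := by
      refine ⟨norm_nonneg z₁, fun z hz => ?_⟩
      have : z = 0 := norm_le_zero_iff.mp hz
      rw [this, hp0]; exact h1E
    have hAne : A.Nonempty := ⟨0, h0A⟩
    have hbdd : BddAbove A := ⟨‖z₁‖, fun r hr => hr.1⟩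
    set r₀ : ℝ := sSup A with hr₀def
    have hr₀_le : r₀ ≤ ‖z₁‖ := csSup_le hAne fun r hr => hr.1
    have hr₀_lt1 : r₀ < 1 := lt_of_le_of_lt hr₀_le hz₁b
    have hr₀_nonneg : 0 ≤ r₀ := le_csSup hbdd h0A
    have hlt : ∀ z : ℂ, ‖z‖ < r₀ → p z ∈ E := by
      intro z hz
      obtain ⟨r, hrA, hrz⟩ := exists_lt_of_lt_csSup hAne hz
      exact hrA.2 z hrz.le
    have hr₀_pos : 0 < r₀ := by
      have hcont : ContinuousAt p 0 := (hp' 0 (mem_ball_self one_pos)).continuousAt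
      have hnhds : p ⁻¹' E ∈ nhds (0:ℂ) := by
        apply hcont.preimage_mem_nhds
        apply isOpen_E.mem_nhds
        rw [hp0]; exact h1E
      obtain ⟨ε, hεpos, hε⟩ := Metric.mem_nhds_iff.mp hnhds
      have hmem : min (ε/2) (‖z₁‖) ∈ A := by
        refine ⟨min_le_right _ _, fun z hz => ?_⟩
        apply hε
        rw [mem_ball_zero_iff]
        calc ‖z‖ ≤ min (ε/2) (‖z₁‖) := hz
          _ ≤ ε/2 := min_le_left _ _
          _ < ε := by linarith
      have := le_csSup hbdd hmem
      have hminpos : 0 < min (ε/2) (‖z₁‖) := lt_min (by linarith) hz₁pos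
      linarith
    -- boundary points land in the closure of E
    have hcl : ∀ z : ℂ, ‖z‖ = r₀ → p z ∈ closure E := by
      intro z hz
      have hzb : z ∈ Metric.ball (0:ℂ) 1 := mem_ball_zero_iff.mpr (hz ▸ hr₀_lt1)
      have hpz : ContinuousAt p z := (hp' z hzb).continuousAt
      have htend : Filter.Tendsto (fun t : ℝ => p ((t:ℂ) * z)) (nhdsWithin 1 (Set.Iio 1))
          (nhds (p z)) := by
        have h1 : Filter.Tendsto (fun t : ℝ => (t:ℂ) * z) (nhdsWithin 1 (Set.Iio 1))
            (nhds z) := by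
          have h0 : Continuous (fun t : ℝ => (t:ℂ) * z) :=
            Complex.continuous_ofReal.mul continuous_const
          have := (h0.tendsto (1:ℝ)).mono_left
            (nhdsWithin_le_nhds : nhdsWithin (1:ℝ) (Set.Iio 1) ≤ nhds 1)
          simpa using this
        exact (hpz.tendsto.comp h1)
      apply mem_closure_of_tendsto htend
      filter_upwards [Ioo_mem_nhdsLT_of_mem (show (1:ℝ) ∈ Set.Ioc 0 1 by constructor <;> norm_num)]
        with t ht
      apply hlt
      rw [norm_mul, Complex.norm_real, Real.norm_eq_abs, abs_of_pos ht.1, hz]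
      calc t * r₀ < 1 * r₀ := by exact mul_lt_mul_of_pos_right ht.2 hr₀_pos
        _ = r₀ := one_mul r₀
    -- there is a boundary point where p exits E
    have hz₀ex : ∃ z₀ : ℂ, ‖z₀‖ = r₀ ∧ p z₀ ∉ E := by
      by_contra hcon
      push_neg at hcon
      have hall : ∀ z : ℂ, ‖z‖ ≤ r₀ → p z ∈ E := fun z hz =>
        hz.lt_or_eq.elim (hlt z) (hcon z)
      rcases eq_or_lt_of_le hr₀_le with heq | hlt₁
      · exact hz₁n (hall z₁ heq.ge)
      · set U : Set ℂ := Metric.ball (0:ℂ) 1 ∩ p ⁻¹' E with hUdef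
        have hUopen : IsOpen U :=
          ContinuousOn.isOpen_inter_preimage hpc Metric.isOpen_ball isOpen_E
        have hsubU : Metric.closedBall (0:ℂ) r₀ ⊆ U := by
          intro z hz
          rw [mem_closedBall_zero_iff] at hz
          exact ⟨mem_ball_zero_iff.mpr (lt_of_le_of_lt hz hr₀_lt1), hall z hz⟩
        obtain ⟨δ, hδpos, hδ⟩ :=
          (isCompact_closedBall (0:ℂ) r₀).exists_cthickening_subset_open hUopen hsubU
        have hball' : Metric.closedBall (0:ℂ) (δ + r₀) ⊆ U := by
          rw [← cthickening_closedBall hδpos.le hr₀_nonneg]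
          exact hδ
        have hmem : min (δ + r₀) (‖z₁‖) ∈ A := by
          refine ⟨min_le_right _ _, fun z hz => ?_⟩
          have : z ∈ Metric.closedBall (0:ℂ) (δ + r₀) :=
            mem_closedBall_zero_iff.mpr (hz.trans (min_le_left _ _))
          exact (hball' this).2
        have := le_csSup hbdd hmem
        have : r₀ < min (δ + r₀) (‖z₁‖) := lt_min (by linarith) hlt₁
        linarith
    obtain ⟨z₀, hz₀norm, hz₀notE⟩ := hz₀ex
    have hz₀ball : z₀ ∈ Metric.ball (0:ℂ) 1 := mem_ball_zero_iff.mpr (hz₀norm ▸ hr₀_lt1)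
    -- all points of the closed ball of radius r₀ map into exp(closedBall 0 1)
    have hcball : ∀ z : ℂ, ‖z‖ ≤ r₀ →
        ‖Complex.log (p z)‖ ≤ 1 ∧ Complex.exp (Complex.log (p z)) = p z ∧
          p z ∈ Complex.slitPlane := by
      intro z hz
      rcases hz.lt_or_eq with h | h
      · exact mem_cE (Set.image_mono Metric.ball_subset_closedBall (hlt z h))
      · exact mem_cE (closure_E_subset (hcl z h))
    set w₀ : ℂ := Complex.log (p z₀) with hw₀def
    obtain ⟨hw₀le, hw₀exp, hz₀slit⟩ := hcball z₀ hz₀norm.le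
    rw [← hw₀def] at hw₀exp
    have hw₀1 : ‖w₀‖ = 1 := by
      rcases hw₀le.lt_or_eq with h | h
      · exact absurd (mem_E_of hw₀exp h) hz₀notE
      · exact h
    have hw₀ne : w₀ ≠ 0 := by
      intro h; rw [h] at hw₀1; simp at hw₀1
    have hpz₀ne : p z₀ ≠ 0 := Complex.slitPlane_ne_zero hz₀slit
    -- find a slightly larger ball on which p stays in the slit plane
    have hVopen : IsOpen (Metric.ball (0:ℂ) 1 ∩ p ⁻¹' Complex.slitPlane) :=
      ContinuousOn.isOpen_inter_preimage hpc Metric.isOpen_ball Complex.isOpen_slitPlane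
    have hsubV : Metric.closedBall (0:ℂ) r₀ ⊆ Metric.ball (0:ℂ) 1 ∩ p ⁻¹' Complex.slitPlane := by
      intro z hz
      rw [mem_closedBall_zero_iff] at hz
      exact ⟨mem_ball_zero_iff.mpr (lt_of_le_of_lt hz hr₀_lt1), (hcball z hz).2.2⟩
    obtain ⟨δ₀, hδ₀pos, hδ₀⟩ :=
      (isCompact_closedBall (0:ℂ) r₀).exists_cthickening_subset_open hVopen hsubV
    set δ : ℝ := min δ₀ ((1 - r₀)/2) with hδdef
    have hδpos : 0 < δ := lt_min hδ₀pos (by linarith)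
    set R' : ℝ := r₀ + δ with hR'def
    have hR'lt1 : R' < 1 := by
      have : δ ≤ (1 - r₀)/2 := min_le_right _ _
      simp only [hR'def]; linarith
    have hR'V : Metric.closedBall (0:ℂ) R' ⊆ Metric.ball (0:ℂ) 1 ∩ p ⁻¹' Complex.slitPlane := by
      intro z hz
      apply hδ₀
      have h1 : Metric.closedBall (0:ℂ) R' ⊆ Metric.closedBall (0:ℂ) (δ₀ + r₀) := by
        apply Metric.closedBall_subset_closedBall
        have : δ ≤ δ₀ := min_le_left _ _
        simp only [hR'def]; linarith
      rw [← cthickening_closedBall hδ₀pos.le hr₀_nonneg] at h1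
      exact h1 hz
    -- the rescaled Schwarz function g
    set g : ℂ → ℂ := fun ζ => Complex.log (p (z₀ * ζ)) / w₀ with hgdef
    set R : ℝ := R' / r₀ with hRdef
    have hR1 : 1 < R := by
      rw [hRdef, lt_div_iff₀ hr₀_pos]
      simp only [hR'def]; linarith
    have hmul_mem : ∀ ζ : ℂ, ‖ζ‖ < R → p (z₀ * ζ) ∈ Complex.slitPlane ∧
        z₀ * ζ ∈ Metric.ball (0:ℂ) 1 := by
      intro ζ hζ
      have h1 : ‖z₀ * ζ‖ ≤ R' := by
        rw [norm_mul, hz₀norm]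
        calc r₀ * ‖ζ‖ ≤ r₀ * R := by
              exact mul_le_mul_of_nonneg_left hζ.le hr₀_nonneg
          _ = R' := by rw [hRdef]; field_simp
      have := hR'V (mem_closedBall_zero_iff.mpr h1)
      exact ⟨this.2, this.1⟩
    have hg_diff : DifferentiableOn ℂ g (Metric.ball 0 R) := by
      intro ζ hζ
      rw [mem_ball_zero_iff] at hζ
      obtain ⟨hslit, hball⟩ := hmul_mem ζ hζ
      have hinner : DifferentiableAt ℂ (fun ζ : ℂ => p (z₀ * ζ)) ζ :=
        (hp' _ hball).comp ζ ((differentiableAt_id.const_mul z₀))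
      exact (((Complex.differentiableAt_log hslit).comp ζ hinner).div_const
        w₀).differentiableWithinAt
    have hg_le_one : ∀ ζ : ℂ, ‖ζ‖ ≤ 1 → ‖g ζ‖ ≤ 1 := by
      intro ζ hζ
      have h1 : ‖z₀ * ζ‖ ≤ r₀ := by
        rw [norm_mul, hz₀norm]
        calc r₀ * ‖ζ‖ ≤ r₀ * 1 := mul_le_mul_of_nonneg_left hζ hr₀_nonneg
          _ = r₀ := mul_one r₀
      have := (hcball _ h1).1
      rw [hgdef]
      simp only [norm_div, hw₀1, div_one]
      exact this
    have hg0 : g 0 = 0 := by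
      rw [hgdef]
      simp only [mul_zero, hp0, Complex.log_one, zero_div]
    have hg1 : g 1 = 1 := by
      rw [hgdef]
      simp only [mul_one, ← hw₀def]
      exact div_self hw₀ne
    -- Schwarz lemma: ‖g ζ‖ ≤ ‖ζ‖ on the unit ball
    have hg_diff1 : DifferentiableOn ℂ g (Metric.ball 0 1) :=
      hg_diff.mono (Metric.ball_subset_ball hR1.le)
    have hSchwarz : ∀ ζ : ℂ, ‖ζ‖ < 1 → ‖g ζ‖ ≤ ‖ζ‖ := by
      intro ζ hζ
      by_contra hcon
      push_neg at hcon
      have key : ∀ ε : ℝ, 0 < ε → ‖g ζ‖ ≤ (1 + ε) * ‖ζ‖ := by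
        intro ε hε
        have hmaps : Set.MapsTo g (Metric.ball 0 1) (Metric.ball (g 0) (1 + ε)) := by
          intro x hx
          rw [mem_ball_zero_iff] at hx
          rw [hg0, Metric.mem_ball, dist_zero_right]
          exact lt_of_le_of_lt (hg_le_one x hx.le) (by linarith)
        have := Complex.dist_le_div_mul_dist_of_mapsTo_ball hg_diff1 (hmaps.mono_right Metric.ball_subset_closedBall)
          (mem_ball_zero_iff.mpr hζ)
        rw [hg0, dist_zero_right, dist_zero_right, div_one] at this
        exact this
      have hζpos : 0 < ‖ζ‖ := by
        rcases eq_or_lt_of_le (norm_nonneg ζ) with h | h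
        · exfalso
          have hζ0 : ζ = 0 := norm_le_zero_iff.mp h.ge
          rw [hζ0, hg0] at hcon
          exact absurd hcon (lt_irrefl _)
        · exact h
      have hfrac : 0 < (‖g ζ‖ - ‖ζ‖) / ‖ζ‖ := div_pos (by linarith) hζpos
      have := key _ (half_pos hfrac)
      have hcancel : (‖g ζ‖ - ‖ζ‖) / ‖ζ‖ * ‖ζ‖ = ‖g ζ‖ - ‖ζ‖ :=
        div_mul_cancel₀ _ hζpos.ne'
      nlinarith [this, hcancel, hζpos]
    -- derivative of g at 1
    have hz₀1 : z₀ * 1 = z₀ := mul_one z₀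
    have hpd : HasDerivAt p (deriv p z₀) z₀ := (hp' z₀ hz₀ball).hasDerivAt
    have hlog : HasDerivAt Complex.log (p z₀)⁻¹ (p z₀) := Complex.hasDerivAt_log hz₀slit
    have hlp : HasDerivAt (fun y => Complex.log (p y)) ((p z₀)⁻¹ * deriv p z₀) z₀ :=
      hlog.comp z₀ hpd
    have hinner : HasDerivAt (fun ζ : ℂ => z₀ * ζ) z₀ 1 := by
      simpa using (hasDerivAt_id (1:ℂ)).const_mul z₀
    have hlp' : HasDerivAt (fun y => Complex.log (p y)) ((p z₀)⁻¹ * deriv p z₀) (z₀ * 1) := by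
      rwa [hz₀1]
    set m : ℂ := (p z₀)⁻¹ * deriv p z₀ * z₀ / w₀ with hmdef
    have hgd : HasDerivAt g m 1 := by
      have := (hlp'.comp 1 hinner).div_const w₀
      exact this
    -- transfer to the real line
    have hgd1 : HasDerivAt (fun t : ℝ => g ((t:ℝ) : ℂ)) m 1 := by
      have : HasDerivAt g m ((1:ℝ):ℂ) := by rwa [Complex.ofReal_one]
      exact this.comp_ofReal
    have hRe : HasDerivAt (fun t : ℝ => (g ((t:ℝ):ℂ)).re) m.re 1 :=
      Complex.reCLM.hasFDerivAt.comp_hasDerivAt 1 hgd1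
    have hIm : HasDerivAt (fun t : ℝ => (g ((t:ℝ):ℂ)).im) m.im 1 :=
      Complex.imCLM.hasFDerivAt.comp_hasDerivAt 1 hgd1
    set G : ℝ → ℝ := fun t => (g ((t:ℝ):ℂ)).re ^ 2 + (g ((t:ℝ):ℂ)).im ^ 2 with hGdef
    have hGd : HasDerivAt G (2 * (g 1).re * m.re + 2 * (g 1).im * m.im) 1 := by
      have h1 := ((hRe.pow 2).add (hIm.pow 2))
      convert h1 using 1
      norm_num [Complex.ofReal_one]
      try ring
      all_goals try rfl
      norm_num [Complex.ofReal_one]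
    have hGnorm : ∀ t : ℝ, G t = ‖g ((t:ℝ):ℂ)‖ ^ 2 := by
      intro t
      rw [hGdef]
      simp only [Complex.sq_norm, Complex.normSq_apply]
      ring
    have hG1 : G 1 = 1 := by
      rw [hGnorm]
      rw [Complex.ofReal_one, hg1]
      norm_num
    have hGle : ∀ t : ℝ, t ∈ Set.Ioo (0:ℝ) 1 → G t ≤ t ^ 2 := by
      intro t ht
      rw [hGnorm]
      have h1 : ‖((t:ℝ):ℂ)‖ = t := by
        rw [Complex.norm_real, Real.norm_eq_abs, abs_of_pos ht.1]
      have h2 : ‖g ((t:ℝ):ℂ)‖ ≤ t := by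
        have := hSchwarz ((t:ℝ):ℂ) (by rw [h1]; exact ht.2)
        rwa [h1] at this
      exact pow_le_pow_left₀ (norm_nonneg _) h2 2
    -- slope argument: the derivative of G at 1 is at least 2
    have hm_re : 1 ≤ m.re := by
      have hgval : 2 * (g 1).re * m.re + 2 * (g 1).im * m.im = 2 * m.re := by
        rw [hg1]; simp
      rw [hgval] at hGd
      have hslope := hasDerivAt_iff_tendsto_slope.mp hGd
      have hslope' : Filter.Tendsto (slope G 1) (nhdsWithin 1 (Set.Iio 1)) (nhds (2 * m.re)) :=
        hslope.mono_left (nhdsWithin_mono 1 (fun x hx => Set.mem_setOf.mpr (ne_of_lt hx)))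
      have htend2 : Filter.Tendsto (fun t : ℝ => 1 + t) (nhdsWithin 1 (Set.Iio 1))
          (nhds (2:ℝ)) := by
        have : Filter.Tendsto (fun t : ℝ => 1 + t) (nhds 1) (nhds (1 + 1)) :=
          (continuous_const.add continuous_id).tendsto 1
        norm_num at this
        exact this.mono_left nhdsWithin_le_nhds
      have hle : ∀ᶠ t in nhdsWithin 1 (Set.Iio 1), (fun t : ℝ => 1 + t) t ≤ slope G 1 t := by
        filter_upwards [Ioo_mem_nhdsLT_of_mem
          (show (1:ℝ) ∈ Set.Ioc 0 1 by constructor <;> norm_num)] with t ht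
        have h1t : t - 1 < 0 := by linarith [ht.2]
        have hGt := hGle t ht
        rw [slope_def_field, hG1, le_div_iff_of_neg h1t]
        nlinarith [hGt]
      have := le_of_tendsto_of_tendsto htend2 hslope' hle
      linarith
    have hm_norm : 1 ≤ ‖m‖ := le_trans hm_re (by
      calc m.re ≤ |m.re| := le_abs_self _
        _ ≤ ‖m‖ := Complex.abs_re_le_norm m
        _ = ‖m‖ := rfl)
    -- final contradiction via the subordination hypothesis
    obtain ⟨v, hv_diff, hv0, hv_lt, hv_eq⟩ := hsub
    have hz₀disk : z₀ ∈ unitDisk := hz₀ball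
    have hqeq : p z₀ + (β:ℂ) * z₀ * p z₀ * deriv p z₀ = Complex.exp (v z₀) := hv_eq z₀ hz₀disk
    have hvlt : ‖v z₀‖ < 1 := hv_lt z₀ hz₀disk
    -- rewrite in terms of m and w₀
    have hderiv_eq : z₀ * deriv p z₀ = m * w₀ * p z₀ := by
      rw [hmdef]
      field_simp
    have hq2 : p z₀ + (β:ℂ) * z₀ * p z₀ * deriv p z₀
        = Complex.exp w₀ + (β:ℂ) * m * w₀ * Complex.exp w₀ * Complex.exp w₀ := by
      have hd2 : z₀ * deriv p z₀ = m * w₀ * Complex.exp w₀ := by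
        rw [hderiv_eq, hw₀exp]
      rw [← hw₀exp]
      linear_combination ((β:ℂ) * Complex.exp w₀) * hd2
    clear_value m w₀
    have hx1 : -1 ≤ w₀.re := by
      have := Complex.abs_re_le_norm w₀
      rw [hw₀1] at this
      rw [abs_le] at this
      exact this.1
    have hβpos : (0:ℝ) < β := by
      have := Real.exp_pos 1
      nlinarith [pow_pos (Real.exp_pos 1) 3]
    have hnorm_exp : ‖Complex.exp w₀‖ = Real.exp w₀.re := by
      rw [Complex.norm_exp]
    have hlower : β * Real.exp w₀.re ^ 2 - Real.exp w₀.re ≤ ‖p z₀ + (β:ℂ) * z₀ * p z₀ * deriv p z₀‖ := by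
      rw [hq2]
      have h1 : ‖(β:ℂ) * m * w₀ * Complex.exp w₀ * Complex.exp w₀‖
          = β * ‖m‖ * Real.exp w₀.re ^ 2 := by
        simp only [norm_mul, hnorm_exp, hw₀1, Complex.norm_real, Real.norm_eq_abs,
          abs_of_pos hβpos]
        ring
      have h2 : ‖(β:ℂ) * m * w₀ * Complex.exp w₀ * Complex.exp w₀‖ - ‖Complex.exp w₀‖
          ≤ ‖Complex.exp w₀ + (β:ℂ) * m * w₀ * Complex.exp w₀ * Complex.exp w₀‖ := by
        have := norm_sub_norm_le ((β:ℂ) * m * w₀ * Complex.exp w₀ * Complex.exp w₀)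
          (-(Complex.exp w₀))
        simp only [norm_neg, sub_neg_eq_add] at this
        calc ‖(β:ℂ) * m * w₀ * Complex.exp w₀ * Complex.exp w₀‖ - ‖Complex.exp w₀‖
            ≤ ‖(β:ℂ) * m * w₀ * Complex.exp w₀ * Complex.exp w₀ + Complex.exp w₀‖ := this
          _ = ‖Complex.exp w₀ + (β:ℂ) * m * w₀ * Complex.exp w₀ * Complex.exp w₀‖ := by
              rw [add_comm]
      rw [h1, hnorm_exp] at h2
      have h3 : β * Real.exp w₀.re ^ 2 ≤ β * ‖m‖ * Real.exp w₀.re ^ 2 := by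
        nlinarith [mul_nonneg (mul_nonneg hβpos.le (sub_nonneg.mpr hm_norm))
          (sq_nonneg (Real.exp w₀.re))]
      linarith
    have hupper : ‖p z₀ + (β:ℂ) * z₀ * p z₀ * deriv p z₀‖ < Real.exp 1 := by
      rw [hqeq, Complex.norm_exp]
      apply Real.exp_lt_exp.mpr
      calc (v z₀).re ≤ |(v z₀).re| := le_abs_self _
        _ ≤ ‖v z₀‖ := Complex.abs_re_le_norm _
        _ = ‖v z₀‖ := rfl
        _ < 1 := hvlt
    have hkey := key_ineq hβ hx1
    linarith

end
end

section
/- Let β be a real number with β ≥ e³ + 1, and let p ∈ H₁. If the function z ↦ p(z)² + β·z·p(z)·p′(z) is subordinate to z ↦ e^z on 𝔻, then p is subordinate to z ↦ e^z on 𝔻. -/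
open Complex

noncomputable section

namespace Stmt17Aux

open MeasureTheory intervalIntegral Set

lemma expw_re {w : ℂ} (hw : ‖w‖ < 1) : Real.exp (-1) / 2 ≤ (Complex.exp w).re := by
  have h1 : |w.re| < 1 := lt_of_le_of_lt (Complex.abs_re_le_norm w) hw
  have h2 : |w.im| < 1 := lt_of_le_of_lt (Complex.abs_im_le_norm w) hw
  rw [Complex.exp_re]
  have hc : (1:ℝ)/2 ≤ Real.cos w.im := by
    have h := Real.one_sub_sq_div_two_le_cos (x := w.im)
    nlinarith [_root_.sq_abs w.im, abs_nonneg w.im]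
  have he : Real.exp (-1) ≤ Real.exp w.re := by
    apply Real.exp_le_exp.2
    rcases abs_lt.1 h1 with ⟨hl, _⟩
    linarith
  nlinarith [Real.exp_pos w.re, Real.exp_pos (-1)]

lemma abs_sin_mul_cos_one {y : ℝ} (hy : |y| < 1) :
    |Real.sin y| * Real.cos 1 ≤ Real.sin 1 * Real.cos y := by
  have h3 : Real.pi > 3 := Real.pi_gt_three
  have hs : Real.sin (|y| - 1) ≤ 0 :=
    Real.sin_nonpos_of_nonpos_of_neg_pi_le (by linarith [abs_nonneg y]) (by linarith [abs_nonneg y])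
  rw [Real.sin_sub] at hs
  have habs : |Real.sin y| = Real.sin |y| := by
    rcases le_or_gt 0 y with h | h
    · rw [_root_.abs_of_nonneg h, _root_.abs_of_nonneg
        (Real.sin_nonneg_of_nonneg_of_le_pi h (by linarith [(abs_lt.1 hy).2]))]
    · have hsy : Real.sin y ≤ 0 := by
        have : 0 ≤ Real.sin (-y) := Real.sin_nonneg_of_nonneg_of_le_pi (by linarith)
          (by linarith [(abs_lt.1 hy).1])
        rw [Real.sin_neg] at this; linarith
      rw [_root_.abs_of_neg h, _root_.abs_of_nonpos hsy, ← Real.sin_neg]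
  rw [habs]
  rw [Real.cos_abs] at hs
  nlinarith [hs]

lemma expw_im {w : ℂ} (hw : ‖w‖ < 1) :
    |(Complex.exp w).im| ≤ Real.tan 1 * (Complex.exp w).re := by
  have h2 : |w.im| < 1 := lt_of_le_of_lt (Complex.abs_im_le_norm w) hw
  rw [Complex.exp_im, Complex.exp_re, abs_mul, abs_of_pos (Real.exp_pos _),
    Real.tan_eq_sin_div_cos]
  have hc1 : 0 < Real.cos 1 := Real.cos_one_pos
  have hkey := abs_sin_mul_cos_one h2
  rw [div_mul_eq_mul_div, le_div_iff₀ hc1]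
  have hexp := (Real.exp_pos w.re).le
  calc Real.exp w.re * |Real.sin w.im| * Real.cos 1
      = Real.exp w.re * (|Real.sin w.im| * Real.cos 1) := by ring
    _ ≤ Real.exp w.re * (Real.sin 1 * Real.cos w.im) := by
        exact mul_le_mul_of_nonneg_left hkey hexp
    _ = Real.sin 1 * (Real.exp w.re * Real.cos w.im) := by ring

lemma expw_abs {w : ℂ} (hw : ‖w‖ < 1) : ‖Complex.exp w‖ ≤ Real.exp 1 := by
  rw [Complex.norm_exp]
  apply Real.exp_le_exp.2
  have h1 : |w.re| < 1 := lt_of_le_of_lt (Complex.abs_re_le_norm w) hw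
  linarith [(abs_lt.1 h1).2]


lemma key (β : ℝ) (hβ0 : 0 < β) (p ω : ℂ → ℂ)
    (hp : DifferentiableOn ℂ p unitDisk)
    (hωd : DifferentiableOn ℂ ω unitDisk)
    (hωlt : ∀ z ∈ unitDisk, ‖ω z‖ < 1)
    (heq : ∀ z ∈ unitDisk, (p z)^2 + (β:ℂ) * z * p z * deriv p z = Complex.exp (ω z))
    {z : ℂ} (hz : z ∈ unitDisk) :
    Real.exp (-1) / 2 ≤ ((p z)^2).re ∧ |((p z)^2).im| ≤ Real.tan 1 * ((p z)^2).re ∧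
      ‖(p z)^2‖ ≤ Real.exp 1 := by
  have hopen : IsOpen unitDisk := Metric.isOpen_ball
  set a : ℝ := 2/β with ha
  have ha0 : 0 < a := by positivity
  set Q : ℂ → ℂ := fun w => (p w)^2 with hQdef
  set h : ℝ → ℂ := fun s => Complex.exp (ω ((s:ℝ) * z)) with hh
  set ρ : ℝ → ℝ := fun s => a * s ^ (a-1) with hρ
  have hmem : ∀ s : ℝ, s ∈ Icc (0:ℝ) 1 → (s:ℂ) * z ∈ unitDisk := by
    intro s hs
    simp only [unitDisk, Metric.mem_ball, dist_zero_right] at hz ⊢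
    rw [norm_mul, Complex.norm_real, Real.norm_eq_abs, _root_.abs_of_nonneg hs.1]
    calc s * ‖z‖ ≤ 1 * ‖z‖ := by
          apply mul_le_mul_of_nonneg_right hs.2 (norm_nonneg z)
      _ = ‖z‖ := one_mul _
      _ < 1 := hz
  have hQdiff : ∀ w ∈ unitDisk, HasDerivAt Q (2 * p w * deriv p w) w := by
    intro w hw
    have hpw : HasDerivAt p (deriv p w) w :=
      (hp.differentiableAt (hopen.mem_nhds hw)).hasDerivAt
    simpa using hpw.fun_pow 2
  have hrel : ∀ w ∈ unitDisk,
      Q w + ((β:ℂ)/2) * w * (2 * p w * deriv p w) = Complex.exp (ω w) := by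
    intro w hw
    have := heq w hw
    simp only [hQdef]
    linear_combination this
  -- continuity helpers
  have hinner : Continuous fun s : ℝ => (s:ℂ) * z := by continuity
  have hQc : ContinuousOn (fun s : ℝ => Q ((s:ℂ) * z)) (Icc 0 1) := by
    apply ((hp.continuousOn.pow 2).comp hinner.continuousOn)
    intro s hs; exact hmem s hs
  have hhc : ContinuousOn h (Icc 0 1) := by
    apply (Complex.continuous_exp.comp_continuousOn
      ((hωd.continuousOn).comp hinner.continuousOn ?_))
    intro s hs; exact hmem s hs
  -- FTC setup
  set G : ℝ → ℂ := fun s => ((s ^ a : ℝ) : ℂ) * Q ((s:ℂ) * z) with hG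
  have hGc : ContinuousOn G (Icc 0 1) := by
    apply ContinuousOn.mul _ hQc
    exact (Complex.continuous_ofReal.comp (Real.continuous_rpow_const ha0.le)).continuousOn
  have hrpow_int : IntervalIntegrable (fun s : ℝ => s ^ (a-1)) volume 0 1 :=
    intervalIntegrable_rpow' (by linarith)
  have hρ_int : IntervalIntegrable ρ volume 0 1 := hrpow_int.const_mul a
  have hρC_int : IntervalIntegrable (fun s : ℝ => ((ρ s : ℝ) : ℂ)) volume 0 1 := by
    exact ⟨hρ_int.1.ofReal, hρ_int.2.ofReal⟩
  have hint : IntervalIntegrable (fun s : ℝ => ((ρ s : ℝ) : ℂ) * h s) volume 0 1 := by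
    apply hρC_int.mul_continuousOn
    rwa [Set.uIcc_of_le (zero_le_one (α := ℝ))]
  have hderiv : ∀ s ∈ Ioo (0:ℝ) 1,
      HasDerivWithinAt G (((ρ s : ℝ) : ℂ) * h s) (Ioi s) s := by
    intro s hs
    have hs0 : s ≠ 0 := ne_of_gt hs.1
    have hsz : (s:ℂ) * z ∈ unitDisk := hmem s ⟨hs.1.le, hs.2.le⟩
    have d1 : HasDerivAt (fun t : ℝ => ((t ^ a : ℝ) : ℂ)) ((a * s^(a-1) : ℝ)) s :=
      (Real.hasDerivAt_rpow_const (Or.inl hs0)).ofReal_comp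
    have dinner : HasDerivAt (fun w : ℂ => w * z) z (s:ℂ) := hasDerivAt_mul_const z
    have dQ : HasDerivAt Q (2 * p ((s:ℂ)*z) * deriv p ((s:ℂ)*z)) ((s:ℂ)*z) := hQdiff _ hsz
    have dcomp : HasDerivAt (fun w : ℂ => Q (w * z))
        (2 * p ((s:ℂ)*z) * deriv p ((s:ℂ)*z) * z) (s:ℂ) := by
      exact dQ.comp (s:ℂ) dinner
    have d2 : HasDerivAt (fun t : ℝ => Q ((t:ℂ) * z))
        (2 * p ((s:ℂ)*z) * deriv p ((s:ℂ)*z) * z) s := dcomp.comp_ofReal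
    have dG : HasDerivAt G
        (((a * s^(a-1) : ℝ) : ℂ) * Q ((s:ℂ)*z)
          + ((s ^ a : ℝ) : ℂ) * (2 * p ((s:ℂ)*z) * deriv p ((s:ℂ)*z) * z)) s := d1.mul d2
    have hsa : (s:ℝ) ^ a = s ^ (a-1) * s := by
      rw [← Real.rpow_add_one hs0]; norm_num
    have hval : ((a * s^(a-1) : ℝ) : ℂ) * Q ((s:ℂ)*z)
          + ((s ^ a : ℝ) : ℂ) * (2 * p ((s:ℂ)*z) * deriv p ((s:ℂ)*z) * z)
        = ((ρ s : ℝ) : ℂ) * h s := by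
      have hβne : (β:ℂ) ≠ 0 := by exact_mod_cast hβ0.ne'
      have hrw := hrel ((s:ℂ)*z) hsz
      rw [hsa]
      simp only [hρ, hh, ← hrw, ha, hsa]
      push_cast
      field_simp
    rw [← hval]
    exact dG.hasDerivWithinAt
  have hID : ∫ s in (0:ℝ)..1, ((ρ s : ℝ) : ℂ) * h s = Q z := by
    rw [integral_eq_sub_of_hasDeriv_right_of_le zero_le_one hGc hderiv hint]
    simp only [hG]
    rw [Real.one_rpow, Real.zero_rpow ha0.ne']
    push_cast
    simp
  -- nonnegativity of the density
  have hρnn : ∀ s ∈ Icc (0:ℝ) 1, 0 ≤ ρ s := fun s hs =>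
    mul_nonneg ha0.le (Real.rpow_nonneg hs.1 _)
  have hρ_one : ∫ s in (0:ℝ)..1, ρ s = 1 := by
    simp only [hρ]
    rw [intervalIntegral.integral_const_mul, integral_rpow (Or.inl (by linarith))]
    have h1 : a - 1 + 1 = a := by ring
    rw [h1, Real.one_rpow, Real.zero_rpow ha0.ne']
    field_simp
    norm_num
  have huIcc : Set.uIcc (0:ℝ) 1 = Icc 0 1 := Set.uIcc_of_le zero_le_one
  have hre_int : IntervalIntegrable (fun s => ρ s * (h s).re) volume 0 1 := by
    apply hρ_int.mul_continuousOn
    rw [huIcc]; exact Complex.continuous_re.comp_continuousOn hhc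
  have him_int : IntervalIntegrable (fun s => ρ s * (h s).im) volume 0 1 := by
    apply hρ_int.mul_continuousOn
    rw [huIcc]; exact Complex.continuous_im.comp_continuousOn hhc
  have hre_eq : (Q z).re = ∫ s in (0:ℝ)..1, ρ s * (h s).re := by
    rw [← hID]
    have hcomm := Complex.reCLM.intervalIntegral_comp_comm hint
    simp only [Complex.reCLM_apply] at hcomm
    rw [← hcomm]
    congr 1
    funext s
    simp [Complex.re_ofReal_mul]
  have him_eq : (Q z).im = ∫ s in (0:ℝ)..1, ρ s * (h s).im := by
    rw [← hID]
    have hcomm := Complex.imCLM.intervalIntegral_comp_comm hint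
    simp only [Complex.imCLM_apply] at hcomm
    rw [← hcomm]
    congr 1
    funext s
    simp [Complex.im_ofReal_mul]
  have hωs : ∀ s ∈ Icc (0:ℝ) 1, ‖ω ((s:ℂ) * z)‖ < 1 := fun s hs => hωlt _ (hmem s hs)
  -- Re bound
  have hreQ : Real.exp (-1) / 2 ≤ (Q z).re := by
    rw [hre_eq]
    have hmono : ∫ s in (0:ℝ)..1, ρ s * (Real.exp (-1)/2) ≤ ∫ s in (0:ℝ)..1, ρ s * (h s).re := by
      apply integral_mono_on zero_le_one (hρ_int.mul_const _) hre_int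
      intro s hs
      exact mul_le_mul_of_nonneg_left (expw_re (hωs s hs)) (hρnn s hs)
    calc Real.exp (-1)/2 = (∫ s in (0:ℝ)..1, ρ s) * (Real.exp (-1)/2) := by
          rw [hρ_one, one_mul]
      _ = ∫ s in (0:ℝ)..1, ρ s * (Real.exp (-1)/2) := (intervalIntegral.integral_mul_const _ _).symm
      _ ≤ _ := hmono
  -- Im bound
  have him1 : (Q z).im ≤ Real.tan 1 * (Q z).re := by
    rw [him_eq, hre_eq, ← intervalIntegral.integral_const_mul]
    apply integral_mono_on zero_le_one him_int (hre_int.const_mul _)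
    intro s hs
    have h1 := (abs_le.1 (expw_im (hωs s hs))).2
    have h2 := hρnn s hs
    nlinarith
  have him2 : -(Q z).im ≤ Real.tan 1 * (Q z).re := by
    have : -(Q z).im = ∫ s in (0:ℝ)..1, -(ρ s * (h s).im) := by
      rw [him_eq, intervalIntegral.integral_neg]
    rw [this, hre_eq, ← intervalIntegral.integral_const_mul]
    apply integral_mono_on zero_le_one him_int.neg (hre_int.const_mul _)
    intro s hs
    simp only [Pi.neg_apply, hh]
    have h1 := (abs_le.1 (expw_im (hωs s hs))).1
    have h2 := hρnn s hs
    nlinarith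
  have himQ : |(Q z).im| ≤ Real.tan 1 * (Q z).re := abs_le.2 ⟨by linarith, him1⟩
  -- abs bound
  have habsQ : ‖Q z‖ ≤ Real.exp 1 := by
    rw [← hID]
    calc ‖∫ s in (0:ℝ)..1, ((ρ s : ℝ) : ℂ) * h s‖
        ≤ ∫ s in (0:ℝ)..1, ‖((ρ s : ℝ) : ℂ) * h s‖ :=
          intervalIntegral.norm_integral_le_integral_norm zero_le_one
      _ ≤ ∫ s in (0:ℝ)..1, ρ s * Real.exp 1 := by
          apply integral_mono_on zero_le_one hint.norm (hρ_int.mul_const _)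
          intro s hs
          rw [norm_mul, Complex.norm_real, Real.norm_eq_abs, _root_.abs_of_nonneg (hρnn s hs)]
          apply mul_le_mul_of_nonneg_left _ (hρnn s hs)
          exact expw_abs (hωs s hs)
      _ = Real.exp 1 := by rw [intervalIntegral.integral_mul_const, hρ_one, one_mul]
  exact ⟨hreQ, himQ, habsQ⟩

lemma lognorm {Q : ℂ} (h1 : Real.exp (-1)/2 ≤ Q.re) (h2 : |Q.im| ≤ Real.tan 1 * Q.re)
    (h3 : ‖Q‖ ≤ Real.exp 1) : ‖Complex.log Q‖ < 2 := by
  have hre : 0 < Q.re := lt_of_lt_of_le (by positivity) h1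
  have hQne : Q ≠ 0 := fun h => by simp [h] at hre
  have habs_pos : 0 < ‖Q‖ := norm_pos_iff.mpr hQne
  have hπ : Real.pi > 3 := Real.pi_gt_three
  have harg : |Complex.arg Q| ≤ 1 := by
    have hlt : |Complex.arg Q| < Real.pi/2 := Complex.abs_arg_lt_pi_div_two_iff.2 (Or.inl hre)
    by_contra hgt
    push_neg at hgt
    have htan : Real.tan 1 < Real.tan |Complex.arg Q| :=
      Real.tan_lt_tan_of_nonneg_of_lt_pi_div_two zero_le_one hlt hgt
    have habs_tan : Real.tan |Complex.arg Q| = |Real.tan (Complex.arg Q)| := by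
      rcases abs_cases (Complex.arg Q) with ⟨he, hp⟩ | ⟨he, hn⟩
      · rw [he, _root_.abs_of_nonneg (Real.tan_nonneg_of_nonneg_of_le_pi_div_two hp
          (by rw [← he]; exact hlt.le))]
      · rw [he, Real.tan_neg, _root_.abs_of_nonpos (Real.tan_nonpos_of_nonpos_of_neg_pi_div_two_le
          hn.le (by linarith [(abs_lt.1 hlt).1]))]
    have hle : |Real.tan (Complex.arg Q)| ≤ Real.tan 1 := by
      rw [Complex.tan_arg, abs_div, _root_.abs_of_pos hre, div_le_iff₀ hre]
      exact h2
    rw [habs_tan] at htan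
    linarith
  have hlog_up : Real.log (‖Q‖) ≤ 1 := by
    have := Real.log_le_log habs_pos h3
    rwa [Real.log_exp] at this
  have hlog_lo : -(1 + Real.log 2) ≤ Real.log (‖Q‖) := by
    have h4 : Real.exp (-1)/2 ≤ ‖Q‖ := le_trans h1 (Complex.re_le_norm Q)
    have h5 : Real.log (Real.exp (-1)/2) ≤ Real.log (‖Q‖) :=
      Real.log_le_log (by positivity) h4
    rw [Real.log_div (Real.exp_ne_zero _) two_ne_zero, Real.log_exp] at h5
    linarith
  have hsq : ‖Complex.log Q‖^2
      = (Real.log (‖Q‖))^2 + (Complex.arg Q)^2 := by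
    rw [Complex.sq_norm, Complex.normSq_apply, Complex.log_re,
      Complex.log_im]
    ring
  have hlog2 : Real.log 2 < 0.6931471808 := Real.log_two_lt_d9
  have hlog2' : 0 ≤ Real.log 2 := Real.log_nonneg one_le_two
  have ht2 : (Real.log (‖Q‖))^2 ≤ (1 + Real.log 2)^2 := by nlinarith
  have hg2 : (Complex.arg Q)^2 ≤ 1 := by nlinarith [abs_nonneg (Complex.arg Q), _root_.sq_abs (Complex.arg Q)]
  have hfin : ‖Complex.log Q‖^2 < 4 := by nlinarith
  nlinarith [norm_nonneg (Complex.log Q)]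

end Stmt17Aux

theorem stmt_17 (β : ℝ) (hβ : Real.exp 1 ^ 3 + 1 ≤ β)
    (p : ℂ → ℂ) (hp : DifferentiableOn ℂ p unitDisk) (hp0 : p 0 = 1)
    (hsub : Subord (fun z => (p z) ^ 2 + (β : ℂ) * z * p z * deriv p z)
      Complex.exp) :
    Subord p Complex.exp := by
  obtain ⟨ω, hωd, hω0, hωlt, hωeq⟩ := hsub
  have hopen : IsOpen unitDisk := Metric.isOpen_ball
  have hβ0 : 0 < β := lt_of_lt_of_le (by positivity) hβ
  have key := fun {z} (hz : z ∈ unitDisk) =>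
    Stmt17Aux.key β hβ0 p ω hp hωd hωlt (fun z hz => hωeq z hz) hz
  have hreQ : ∀ z ∈ unitDisk, 0 < ((p z)^2).re := fun z hz =>
    lt_of_lt_of_le (by positivity) (key hz).1
  have hQne : ∀ z ∈ unitDisk, (p z)^2 ≠ 0 := by
    intro z hz h0
    have h := hreQ z hz
    rw [h0] at h
    simp at h
  have hlog : ∀ z ∈ unitDisk, ‖Complex.log ((p z)^2)‖ < 2 := fun z hz =>
    Stmt17Aux.lognorm (key hz).1 (key hz).2.1 (key hz).2.2
  set w : ℂ → ℂ := fun z => Complex.log ((p z)^2) / 2 with hwdef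
  have hw0 : w 0 = 0 := by
    simp [hwdef, hp0]
  have hwd : DifferentiableOn ℂ w unitDisk := by
    intro z hz
    have hdz : DifferentiableAt ℂ (fun z => (p z)^2) z :=
      (hp.differentiableAt (hopen.mem_nhds hz)).pow 2
    exact (hdz.differentiableWithinAt.clog (Or.inl (hreQ z hz))).div_const 2
  have hwlt : ∀ z ∈ unitDisk, ‖w z‖ < 1 := by
    intro z hz
    have := hlog z hz
    simp only [hwdef]
    rw [norm_div]
    have h2 : ‖(2:ℂ)‖ = 2 := by norm_num
    rw [h2]
    linarith
  have hE : ∀ z ∈ unitDisk, Complex.exp (w z) ^ 2 = (p z)^2 := by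
    intro z hz
    rw [sq, ← Complex.exp_add]
    have hh : w z + w z = Complex.log ((p z)^2) := by
      simp only [hwdef]; ring
    rw [hh, Complex.exp_log (hQne z hz)]
  set r : ℂ → ℂ := fun z => p z / Complex.exp (w z) with hrdef
  have hwc : ContinuousOn w unitDisk := hwd.continuousOn
  have hEc : ContinuousOn (fun z => Complex.exp (w z)) unitDisk :=
    Complex.continuous_exp.comp_continuousOn hwc
  have hrc : ContinuousOn r unitDisk :=
    hp.continuousOn.div hEc (fun z _ => Complex.exp_ne_zero _)
  have hrval : ∀ z ∈ unitDisk, r z = 1 ∨ r z = -1 := by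
    intro z hz
    have h2 : (r z)^2 = 1 := by
      simp only [hrdef]
      rw [div_pow, hE z hz, div_self (hQne z hz)]
    exact sq_eq_one_iff.1 h2
  have h0mem : (0:ℂ) ∈ unitDisk := by simp [unitDisk]
  have hr0 : r 0 = 1 := by
    simp [hrdef, hw0, hp0]
  have hpe : ∀ z ∈ unitDisk, p z = Complex.exp (w z) := by
    by_contra hcon
    push_neg at hcon
    obtain ⟨z₀, hz₀, hz₀ne⟩ := hcon
    have hrz₀ : r z₀ = -1 := by
      rcases hrval z₀ hz₀ with h | h
      · exfalso
        apply hz₀ne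
        rw [hrdef] at h
        simp only at h
        rw [div_eq_one_iff_eq (Complex.exp_ne_zero _)] at h
        exact h
      · exact h
    have hpc : IsPreconnected unitDisk := (convex_ball (0:ℂ) 1).isPreconnected
    have hA : IsOpen (unitDisk ∩ r⁻¹' (Metric.ball (1:ℂ) 1)) :=
      hrc.isOpen_inter_preimage hopen Metric.isOpen_ball
    have hB : IsOpen (unitDisk ∩ r⁻¹' (Metric.ball (-1:ℂ) 1)) :=
      hrc.isOpen_inter_preimage hopen Metric.isOpen_ball
    have hcover : unitDisk ⊆ (unitDisk ∩ r⁻¹' (Metric.ball (1:ℂ) 1))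
        ∪ (unitDisk ∩ r⁻¹' (Metric.ball (-1:ℂ) 1)) := by
      intro z hz
      rcases hrval z hz with h | h
      · left; exact ⟨hz, by simp [h, Metric.mem_ball]⟩
      · right; exact ⟨hz, by simp [h, Metric.mem_ball]⟩
    have hne1 : (unitDisk ∩ (unitDisk ∩ r⁻¹' (Metric.ball (1:ℂ) 1))).Nonempty :=
      ⟨0, h0mem, h0mem, by simp [hr0, Metric.mem_ball]⟩
    have hne2 : (unitDisk ∩ (unitDisk ∩ r⁻¹' (Metric.ball (-1:ℂ) 1))).Nonempty :=
      ⟨z₀, hz₀, hz₀, by simp [hrz₀, Metric.mem_ball]⟩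
    obtain ⟨y, hymem, hy1, hy2⟩ := hpc _ _ hA hB hcover hne1 hne2
    have hd1 : dist (r y) 1 < 1 := by
      have := hy1.2
      simpa [Metric.mem_ball] using this
    have hd2 : dist (r y) (-1) < 1 := by
      have := hy2.2
      simpa [Metric.mem_ball] using this
    rcases hrval y hymem with h | h <;> rw [h] at hd1 hd2 <;>
      simp [Complex.dist_eq] at hd1 hd2 <;> norm_num at *
  exact ⟨w, hwd, hw0, hwlt, hpe⟩
end
end

section
/- Let β be a real number with β ≥ e³ + e⁻¹, and let p ∈ H₁. If the function z ↦ p(z)³ + β·z·p(z)·p′(z) is subordinate to z ↦ e^z on 𝔻, then p is subordinate to z ↦ e^z on 𝔻. -/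
open Complex

noncomputable section

open Metric Set Filter

lemma exp_ball_good (ζ : ℂ) (hζ : ‖ζ‖ ≤ 1) :
    Complex.exp ζ ∈ Complex.slitPlane ∧ Complex.log (Complex.exp ζ) = ζ := by
  have him : |ζ.im| ≤ 1 := le_trans (Complex.abs_im_le_norm ζ) hζ
  have hpi : (1:ℝ) < Real.pi / 2 := by
    have := Real.pi_gt_three; linarith
  obtain ⟨him1, him2⟩ := abs_le.mp him
  constructor
  · rw [Complex.mem_slitPlane_iff]
    left
    rw [Complex.exp_re]
    have : 0 < Real.cos ζ.im := Real.cos_pos_of_mem_Ioo ⟨by linarith, by linarith⟩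
    positivity
  · exact Complex.log_exp (by linarith) (by linarith)

lemma aux_ineq (β t : ℝ) (hβ : Real.exp 1 ^ 3 + (Real.exp 1)⁻¹ ≤ β) (ht : |t| ≤ 1) :
    Real.exp 1 ≤ β * Real.exp (2*t) - Real.exp (3*t) := by
  obtain ⟨ht1, ht2⟩ := abs_le.mp ht
  have h1 : Real.exp t ≤ (1-t)/2 * Real.exp (-1) + (1+t)/2 * Real.exp 1 := by
    have := convexOn_exp.2 (Set.mem_univ (-1:ℝ)) (Set.mem_univ (1:ℝ))
      (by linarith : (0:ℝ) ≤ (1-t)/2) (by linarith : (0:ℝ) ≤ (1+t)/2) (by ring)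
    rw [smul_eq_mul, smul_eq_mul, smul_eq_mul,
      show (1-t)/2 * (-1) + (1+t)/2 * 1 = t by ring] at this
    exact this
  have h2 : Real.exp (1-2*t) ≤ (1+t)/2 * Real.exp (-1) + (1-t)/2 * Real.exp 3 := by
    have := convexOn_exp.2 (Set.mem_univ (-1:ℝ)) (Set.mem_univ (3:ℝ))
      (by linarith : (0:ℝ) ≤ (1+t)/2) (by linarith : (0:ℝ) ≤ (1-t)/2) (by ring)
    rw [smul_eq_mul, smul_eq_mul, smul_eq_mul,
      show (1+t)/2 * (-1) + (1-t)/2 * 3 = 1-2*t by ring] at this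
    exact this
  have he3 : Real.exp 3 = Real.exp 1 ^ 3 := by
    rw [← Real.exp_nat_mul]; norm_num
  have hen : Real.exp (-1) = (Real.exp 1)⁻¹ := Real.exp_neg 1
  have he13 : Real.exp 1 ≤ Real.exp 3 := Real.exp_le_exp.mpr (by norm_num)
  have hsum : Real.exp t + Real.exp (1-2*t) ≤ β := by
    calc Real.exp t + Real.exp (1-2*t)
        ≤ Real.exp (-1) + (1+t)/2 * Real.exp 1 + (1-t)/2 * Real.exp 3 := by linarith
      _ ≤ Real.exp (-1) + Real.exp 3 := by nlinarith [Real.exp_pos 3]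
      _ ≤ β := by rw [hen, he3] at *; linarith
  have h3 : Real.exp t * Real.exp (2*t) = Real.exp (3*t) := by
    rw [← Real.exp_add]; ring_nf
  have h4 : Real.exp (1-2*t) * Real.exp (2*t) = Real.exp 1 := by
    rw [← Real.exp_add]; ring_nf
  nlinarith [Real.exp_pos (2*t)]


theorem stmt_18 (β : ℝ) (hβ : Real.exp 1 ^ 3 + (Real.exp 1)⁻¹ ≤ β)
    (p : ℂ → ℂ) (hp : DifferentiableOn ℂ p unitDisk) (hp0 : p 0 = 1)
    (hsub : Subord (fun z => (p z) ^ 3 + (β : ℂ) * z * p z * deriv p z)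
      Complex.exp) :
    Subord p Complex.exp := by
  obtain ⟨w, hwd, hw0, hwlt, hweq⟩ := hsub
  have hUD : IsOpen unitDisk := isOpen_ball
  have hmemUD : ∀ z : ℂ, ‖z‖ < 1 → z ∈ unitDisk := fun z hz => mem_ball_zero_iff.mpr hz
  have hpA : ∀ z ∈ unitDisk, DifferentiableAt ℂ p z :=
    fun z hz => hp.differentiableAt (hUD.mem_nhds hz)
  -- the target set E = exp(unit ball), described via log
  set E : Set ℂ := {v | v ∈ Complex.slitPlane ∧ ‖Complex.log v‖ < 1} with hEdef
  have hEopen : IsOpen E := by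
    rw [isOpen_iff_mem_nhds]
    rintro v ⟨h1, h2⟩
    have hc : ContinuousAt Complex.log v := continuousAt_clog h1
    have hm1 : Complex.slitPlane ∈ nhds v := Complex.isOpen_slitPlane.mem_nhds h1
    have hm2 : Complex.log ⁻¹' (Metric.ball 0 1) ∈ nhds v :=
      hc.preimage_mem_nhds (isOpen_ball.mem_nhds (mem_ball_zero_iff.mpr h2))
    filter_upwards [hm1, hm2] with u hu1 hu2
    exact ⟨hu1, mem_ball_zero_iff.mp hu2⟩
  have hexpE : ∀ ζ : ℂ, ‖ζ‖ < 1 → Complex.exp ζ ∈ E := by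
    intro ζ hζ
    obtain ⟨h1, h2⟩ := exp_ball_good ζ hζ.le
    exact ⟨h1, by rw [h2]; exact hζ⟩
  -- F = exp(closed unit ball) is closed and contains closure of E
  set F : Set ℂ := Complex.exp '' Metric.closedBall 0 1 with hFdef
  have hFcl : IsClosed F :=
    ((isCompact_closedBall 0 1).image Complex.continuous_exp).isClosed
  have hEF : E ⊆ F := by
    rintro v ⟨h1, h2⟩
    exact ⟨Complex.log v, mem_closedBall_zero_iff.mpr h2.le,
      Complex.exp_log (Complex.slitPlane_ne_zero h1)⟩
  -- key claim: p maps the disk into E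
  have key : ∀ z ∈ unitDisk, p z ∈ E := by
    by_contra hbad
    push_neg at hbad
    obtain ⟨zb, hzb, hzbE⟩ := hbad
    -- the open set S where p lands in E
    set S : Set ℂ := unitDisk ∩ p ⁻¹' E with hSdef
    have hSopen : IsOpen S := (hp.continuousOn).isOpen_inter_preimage hUD hEopen
    have h0S : (0:ℂ) ∈ S := by
      refine ⟨hmemUD 0 (by norm_num), ?_⟩
      show p 0 ∈ E
      rw [hp0, ← Complex.exp_zero]
      exact hexpE 0 (by norm_num)
    -- minimal-norm bad point z₀
    set K : Set ℂ := Metric.closedBall 0 ‖zb‖ ∩ Sᶜ with hKdef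
    have hKc : IsCompact K := (isCompact_closedBall 0 ‖zb‖).inter_right hSopen.isClosed_compl
    have hzbK : zb ∈ K := ⟨mem_closedBall_zero_iff.mpr le_rfl, fun hS => hzbE hS.2⟩
    obtain ⟨z₀, hz₀K, hz₀min⟩ := hKc.exists_isMinOn ⟨zb, hzbK⟩ continuous_norm.continuousOn
    set r₀ : ℝ := ‖z₀‖ with hr₀def
    have hzb1 : ‖zb‖ < 1 := mem_ball_zero_iff.mp hzb
    have hr₀1 : r₀ < 1 := lt_of_le_of_lt (mem_closedBall_zero_iff.mp hz₀K.1) hzb1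
    have hz₀UD : z₀ ∈ unitDisk := hmemUD z₀ hr₀1
    have hz₀S : z₀ ∉ S := hz₀K.2
    have hr₀0 : 0 < r₀ := by
      rcases eq_or_lt_of_le (norm_nonneg z₀) with h | h
      · exfalso; apply hz₀S
        have : z₀ = 0 := norm_eq_zero.mp h.symm
        rw [this]; exact h0S
      · exact h
    -- interior of the ball of radius r₀ is in S
    have hball : ∀ z : ℂ, ‖z‖ < r₀ → z ∈ S := by
      intro z hz
      by_contra hzS
      have hzK : z ∈ K := ⟨mem_closedBall_zero_iff.mpr
        (le_trans hz.le (mem_closedBall_zero_iff.mp hz₀K.1)), hzS⟩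
      exact absurd (hz₀min hzK) (not_le.mpr hz)
    -- on the sphere, p lands in F
    have hsphere : ∀ z : ℂ, ‖z‖ = r₀ → p z ∈ F := by
      intro z hz
      have hzUD : z ∈ unitDisk := hmemUD z (hz ▸ hr₀1)
      have hcl : z ∈ closure (Metric.ball (0:ℂ) r₀) := by
        rw [closure_ball (0:ℂ) hr₀0.ne']
        exact mem_closedBall_zero_iff.mpr hz.le
      have hcont : ContinuousWithinAt p (Metric.ball (0:ℂ) r₀) z :=
        ((hpA z hzUD).continuousAt).continuousWithinAt
      have : p z ∈ closure (p '' Metric.ball (0:ℂ) r₀) :=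
        hcont.mem_closure_image hcl
      refine hFcl.closure_subset_iff.mpr ?_ this
      rintro - ⟨x, hx, rfl⟩
      exact hEF (hball x (mem_ball_zero_iff.mp hx)).2
    have hcbF : ∀ z : ℂ, ‖z‖ ≤ r₀ → p z ∈ F := by
      intro z hz
      rcases eq_or_lt_of_le hz with h | h
      · exact hsphere z h
      · exact hEF (hball z h).2
    -- the branch of log p
    set h : ℂ → ℂ := fun z => Complex.log (p z) with hhdef
    set U : Set ℂ := unitDisk ∩ p ⁻¹' Complex.slitPlane with hUdef
    have hUopen : IsOpen U :=
      (hp.continuousOn).isOpen_inter_preimage hUD Complex.isOpen_slitPlane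
    have hcbU : Metric.closedBall (0:ℂ) r₀ ⊆ U := by
      intro z hz
      have hz' : ‖z‖ ≤ r₀ := mem_closedBall_zero_iff.mp hz
      obtain ⟨ζ, hζ, hexp⟩ := hcbF z hz'
      refine ⟨hmemUD z (lt_of_le_of_lt hz' hr₀1), ?_⟩
      show p z ∈ Complex.slitPlane
      rw [← hexp]
      exact (exp_ball_good ζ (mem_closedBall_zero_iff.mp hζ)).1
    have hhdiff : ∀ z ∈ U, DifferentiableAt ℂ h z := by
      intro z hz
      exact (Complex.differentiableAt_log hz.2).comp z (hpA z hz.1)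
    have hexph : ∀ z ∈ U, Complex.exp (h z) = p z :=
      fun z hz => Complex.exp_log (Complex.slitPlane_ne_zero hz.2)
    have hhle : ∀ z : ℂ, ‖z‖ ≤ r₀ → ‖h z‖ ≤ 1 := by
      intro z hz
      obtain ⟨ζ, hζ, hexp⟩ := hcbF z hz
      have := (exp_ball_good ζ (mem_closedBall_zero_iff.mp hζ)).2
      show ‖Complex.log (p z)‖ ≤ 1
      rw [← hexp, this]
      exact mem_closedBall_zero_iff.mp hζ
    have hh0 : ‖h z₀‖ = 1 := by
      refine le_antisymm (hhle z₀ le_rfl) (not_lt.mp fun hlt => hz₀S ?_)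
      exact ⟨hz₀UD, (hcbU (mem_closedBall_zero_iff.mpr le_rfl)).2, hlt⟩
    -- thicken
    obtain ⟨ε, hε, hthick⟩ :=
      (isCompact_closedBall (0:ℂ) r₀).exists_cthickening_subset_open hUopen hcbU
    set r₁ : ℝ := min (r₀ + ε) ((r₀ + 1)/2) with hr₁def
    have hr₁0 : r₀ < r₁ := lt_min (by linarith) (by linarith)
    have hr₁1 : r₁ < 1 := lt_of_le_of_lt (min_le_right _ _) (by linarith)
    have hr₁U : Metric.closedBall (0:ℂ) r₁ ⊆ U := by
      refine subset_trans ?_ hthick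
      rw [cthickening_closedBall hε.le hr₀0.le]
      exact closedBall_subset_closedBall
        ((min_le_left _ _).trans (le_of_eq (add_comm _ _)))
    -- rescaled function g
    set R : ℝ := r₁ / r₀ with hRdef
    have hR1 : 1 < R := (one_lt_div hr₀0).mpr hr₁0
    set g : ℂ → ℂ := fun ζ => h (z₀ * ζ) with hgdef
    have hgmem : ∀ ζ : ℂ, ‖ζ‖ < R → z₀ * ζ ∈ U := by
      intro ζ hζ
      apply hr₁U
      rw [mem_closedBall_zero_iff, norm_mul]
      calc ‖z₀‖ * ‖ζ‖ ≤ r₀ * R := by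
            apply mul_le_mul le_rfl hζ.le (norm_nonneg ζ) hr₀0.le
        _ = r₁ := by rw [hRdef]; field_simp
    have hgdiffAt : ∀ ζ : ℂ, ‖ζ‖ < R → DifferentiableAt ℂ g ζ := by
      intro ζ hζ
      exact (hhdiff _ (hgmem ζ hζ)).comp ζ (differentiableAt_id.const_mul z₀)
    have hgdiff : DifferentiableOn ℂ g (Metric.ball 0 1) := by
      intro ζ hζ
      exact (hgdiffAt ζ (lt_trans (mem_ball_zero_iff.mp hζ) hR1)).differentiableWithinAt
    have hg0 : g 0 = 0 := by
      show Complex.log (p (z₀ * 0)) = 0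
      rw [mul_zero, hp0, Complex.log_one]
    have hgle : ∀ ζ : ℂ, ‖ζ‖ ≤ 1 → ‖g ζ‖ ≤ 1 := by
      intro ζ hζ
      apply hhle
      rw [norm_mul]
      calc ‖z₀‖ * ‖ζ‖ ≤ r₀ * 1 := mul_le_mul le_rfl hζ (norm_nonneg ζ) hr₀0.le
        _ = r₀ := mul_one r₀
    have hg1 : g 1 = h z₀ := by show h (z₀ * 1) = h z₀; rw [mul_one]
    have hgnorm1 : ‖g 1‖ = 1 := by rw [hg1]; exact hh0
    -- strict maps-to via maximum modulus
    have hmaps : MapsTo g (Metric.ball 0 1) (Metric.ball 0 1) := by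
      intro a ha
      rw [mem_ball_zero_iff]
      rcases lt_or_eq_of_le (hgle a (mem_ball_zero_iff.mp ha).le) with hlt | heq
      · exact hlt
      · exfalso
        have hmax : IsMaxOn (norm ∘ g) (Metric.ball 0 1) a := by
          intro x hx
          show (norm ∘ g) x ≤ (norm ∘ g) a
          simp only [Function.comp_apply]
          rw [heq]
          exact hgle x (mem_ball_zero_iff.mp hx).le
        have := Complex.norm_eqOn_of_isPreconnected_of_isMaxOn
          (convex_ball (0:ℂ) 1).isPreconnected isOpen_ball hgdiff ha hmax
          (mem_ball_zero_iff.mpr (by norm_num : ‖(0:ℂ)‖ < 1))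
        simp only [Function.comp_apply, Function.const_apply, hg0, norm_zero] at this
        rw [heq] at this
        norm_num at this
    -- Schwarz
    have hschwarz : ∀ r : ℝ, 0 ≤ r → r < 1 → ‖g (r:ℂ)‖ ≤ r := by
      intro r hr0 hr1
      have := Complex.norm_le_norm_of_mapsTo_ball hgdiff (hmaps.mono_right ball_subset_closedBall) hg0
        (z := (r:ℂ)) (by rwa [Complex.norm_real, Real.norm_eq_abs, _root_.abs_of_nonneg hr0])
      rwa [Complex.norm_real,
        Real.norm_eq_abs, _root_.abs_of_nonneg hr0] at this
    -- boundary derivative bound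
    have hgd1 : DifferentiableAt ℂ g 1 :=
      hgdiffAt 1 (by rw [norm_one]; exact hR1)
    set c : ℂ := deriv g 1 with hcdef
    have hc1 : 1 ≤ ‖c‖ := by
      have hder : HasDerivAt g c 1 := hgd1.hasDerivAt
      have hslope := hasDerivAt_iff_tendsto_slope.mp hder
      set u : ℕ → ℂ := fun n => ((1 - 1/(n+1) : ℝ) : ℂ) with hudef
      have hrn0 : ∀ n : ℕ, (0:ℝ) ≤ 1 - 1/(n+1) := by
        intro n
        have h1 : (1:ℝ)/(n+1) ≤ 1 := by
          rw [div_le_one (by positivity)]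
          linarith [Nat.cast_nonneg (α := ℝ) n]
        linarith
      have hrn1 : ∀ n : ℕ, (1 - 1/(n+1) : ℝ) < 1 := by
        intro n
        have : (0:ℝ) < 1/(n+1) := by positivity
        linarith
      have htend0 : Filter.Tendsto (fun n : ℕ => (1:ℝ)/(n+1)) atTop (nhds 0) :=
        tendsto_one_div_add_atTop_nhds_zero_nat
      have htendr : Filter.Tendsto (fun n : ℕ => (1 - 1/(n+1) : ℝ)) atTop (nhds 1) := by
        have := (tendsto_const_nhds (x := (1:ℝ)) (f := atTop (α := ℕ))).sub htend0
        simpa using this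
      have hu : Filter.Tendsto u atTop (nhdsWithin 1 {(1:ℂ)}ᶜ) := by
        apply tendsto_nhdsWithin_of_tendsto_nhds_of_eventually_within
        · have hcoer : Filter.Tendsto (fun x : ℝ => (x:ℂ)) (nhds 1) (nhds ((1:ℝ):ℂ)) :=
            Complex.continuous_ofReal.tendsto 1
          have h2 : Filter.Tendsto u atTop (nhds ((1:ℝ):ℂ)) := hcoer.comp htendr
          simpa using h2
        · apply Filter.Eventually.of_forall
          intro n
          simp only [Set.mem_compl_iff, Set.mem_singleton_iff]
          intro hcontra
          have h3 : ((1 - 1/(n+1) : ℝ) : ℂ) = 1 := hcontra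
          have : (1 - 1/(n+1) : ℝ) = 1 := by exact_mod_cast h3
          linarith [hrn1 n]
      have hnorm := (hslope.comp hu).norm
      refine ge_of_tendsto' hnorm ?_
      intro n
      set r : ℝ := 1 - 1/(n+1) with hrdef
      have hr0 : 0 ≤ r := hrn0 n
      have hr1 : r < 1 := hrn1 n
      have hden : ‖u n - 1‖ = 1 - r := by
        have huval : u n - 1 = ((r - 1 : ℝ) : ℂ) := by push_cast; ring
        rw [huval, Complex.norm_real, Real.norm_eq_abs, _root_.abs_of_nonpos (by linarith)]
        ring
      have hgu : ‖g (u n)‖ ≤ r := hschwarz r hr0 hr1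
      have hnum : 1 - r ≤ ‖g (u n) - g 1‖ := by
        have h1 : ‖g 1‖ - ‖g (u n)‖ ≤ ‖g 1 - g (u n)‖ := norm_sub_norm_le _ _
        rw [norm_sub_rev, hgnorm1] at h1
        linarith
      show 1 ≤ ‖slope g 1 (u n)‖
      rw [slope_def_field, norm_div, hden]
      rw [le_div_iff₀ (by linarith), one_mul]
      exact hnum
    -- derivative identifications
    have hz₀U : z₀ ∈ U := hcbU (mem_closedBall_zero_iff.mpr le_rfl)
    have hhd : DifferentiableAt ℂ h z₀ := hhdiff z₀ hz₀U
    have hcval : c = deriv h z₀ * z₀ := by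
      have inner : HasDerivAt (fun ζ : ℂ => z₀ * ζ) z₀ 1 := by
        simpa using (hasDerivAt_id (1:ℂ)).const_mul z₀
      have outer : HasDerivAt h (deriv h z₀) (z₀ * 1) := by
        rw [mul_one]; exact hhd.hasDerivAt
      exact (outer.comp 1 inner).deriv
    have hpz₀ : p z₀ = Complex.exp (h z₀) := (hexph z₀ hz₀U).symm
    have hpderiv : deriv p z₀ = Complex.exp (h z₀) * deriv h z₀ := by
      have hev : p =ᶠ[nhds z₀] fun z => Complex.exp (h z) := by
        filter_upwards [hUopen.mem_nhds hz₀U] with z hz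
        exact (hexph z hz).symm
      rw [hev.deriv_eq]
      exact (hhd.hasDerivAt.cexp).deriv
    -- the contradiction
    set ζ₀ : ℂ := h z₀ with hζ₀def
    set t : ℝ := ζ₀.re with htdef
    have ht : |t| ≤ 1 := by
      rw [htdef]
      calc |ζ₀.re| ≤ ‖ζ₀‖ := Complex.abs_re_le_norm ζ₀
        _ = 1 := by exact hh0
    have hβ0 : (0:ℝ) < β := by
      have := Real.exp_pos 1
      have h3 : (0:ℝ) < Real.exp 1 ^ 3 := by positivity
      have h4 : (0:ℝ) < (Real.exp 1)⁻¹ := by positivity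
      linarith
    have heq := hweq z₀ hz₀UD
    simp only at heq
    have hnorm_w : ‖Complex.exp (w z₀)‖ < Real.exp 1 := by
      rw [Complex.norm_exp]
      apply Real.exp_lt_exp.mpr
      calc (w z₀).re ≤ |(w z₀).re| := le_abs_self _
        _ ≤ ‖w z₀‖ := Complex.abs_re_le_norm _
        _ < 1 := by exact hwlt z₀ hz₀UD
    -- norm computations
    have hpnorm : ‖p z₀‖ = Real.exp t := by
      rw [hpz₀, Complex.norm_exp]
    have hterm2 : ‖(β:ℂ) * z₀ * p z₀ * deriv p z₀‖ = β * ‖c‖ * (Real.exp t)^2 := by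
      rw [hpderiv, hpz₀]
      rw [show (β:ℂ) * z₀ * Complex.exp (h z₀) * (Complex.exp (h z₀) * deriv h z₀)
          = (β:ℂ) * (deriv h z₀ * z₀) * (Complex.exp (h z₀) * Complex.exp (h z₀)) by ring]
      rw [← hcval]
      rw [norm_mul, norm_mul, norm_mul]
      rw [Complex.norm_real, Real.norm_eq_abs, abs_of_pos hβ0]
      rw [Complex.norm_exp]
      ring
    have hterm1 : ‖(p z₀)^3‖ = Real.exp (3*t) := by
      rw [norm_pow, hpnorm, ← Real.exp_nat_mul]
      norm_num
    have hlower : Real.exp 1 ≤ ‖(p z₀)^3 + (β:ℂ) * z₀ * p z₀ * deriv p z₀‖ := by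
      have htri : ‖(β:ℂ) * z₀ * p z₀ * deriv p z₀‖ - ‖(p z₀)^3‖
          ≤ ‖(p z₀)^3 + (β:ℂ) * z₀ * p z₀ * deriv p z₀‖ := by
        have h1 : ‖(β:ℂ) * z₀ * p z₀ * deriv p z₀‖
            ≤ ‖(p z₀)^3 + (β:ℂ) * z₀ * p z₀ * deriv p z₀‖ + ‖(p z₀)^3‖ := by
          calc ‖(β:ℂ) * z₀ * p z₀ * deriv p z₀‖
              = ‖((p z₀)^3 + (β:ℂ) * z₀ * p z₀ * deriv p z₀) - (p z₀)^3‖ := by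
                congr 1; ring
            _ ≤ _ := norm_sub_le _ _
        linarith
      rw [hterm1, hterm2] at htri
      have hc' : β * (Real.exp t)^2 ≤ β * ‖c‖ * (Real.exp t)^2 := by
        calc β * (Real.exp t)^2 = β * 1 * (Real.exp t)^2 := by ring
          _ ≤ β * ‖c‖ * (Real.exp t)^2 := by gcongr
      have hexp2 : (Real.exp t)^2 = Real.exp (2*t) := by
        rw [← Real.exp_nat_mul]; norm_num
      rw [hexp2] at htri hc'
      have := aux_ineq β t hβ ht
      linarith
    rw [heq] at hlower
    exact absurd hlower (not_le.mpr hnorm_w)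
  -- construct the subordinating function
  refine ⟨fun z => Complex.log (p z), ?_, ?_, ?_, ?_⟩
  · intro z hz
    exact ((Complex.differentiableAt_log (key z hz).1).comp z
      (hpA z hz)).differentiableWithinAt
  · show Complex.log (p 0) = 0
    rw [hp0, Complex.log_one]
  · intro z hz
    exact (key z hz).2
  · intro z hz
    exact (Complex.exp_log (Complex.slitPlane_ne_zero (key z hz).1)).symm
end
end
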